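/- arXiv:1307.5767 — 4 statements merged into one kernel-verified Lean document; each statement's English description precedes it below -/
import Mathlib

section
/- Let f : [a,b] → [c,d] be an integrable function and let y = (1/(b−a)) ∫_a^b f(x) dx be its mean value. Then ∫_a^b |f(x) − y| dx ≤ (b−a)(d−c)/2. -/
open MeasureTheory Set

set_option maxHeartbeats 1600000

/-- If `f : [a,b] → [c,d]` is integrable and `y` is its mean value, then
`∫_a^b |f(x) − y| dx ≤ (b−a)(d−c)/2`. -/
theorem stmt1 (a b c d : ℝ) (hab : a < b) (hcd : c ≤ d) (f : ℝ → ℝ)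
    (hf : IntegrableOn f (Set.Icc a b))
    (hrange : ∀ x ∈ Set.Icc a b, f x ∈ Set.Icc c d)
    (y : ℝ) (hy : y = (1 / (b - a)) * ∫ x in a..b, f x) :
    (∫ x in a..b, |f x - y|) ≤ (b - a) * (d - c) / 2 := by
  have hab' : a ≤ b := hab.le
  have hba : (0:ℝ) < b - a := sub_pos.2 hab
  have hfI : IntegrableOn f (Set.Ioc a b) := hf.mono_set Set.Ioc_subset_Icc_self
  obtain ⟨g, hgm, hfg⟩ := hfI.aestronglyMeasurable
  have hgint : IntegrableOn g (Set.Ioc a b) := hfI.congr hfg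
  -- a.e. range of g
  have hR : ∀ᵐ x ∂(volume.restrict (Set.Ioc a b)), g x ∈ Set.Icc c d := by
    filter_upwards [hfg, ae_restrict_mem measurableSet_Ioc] with x hx hx2
    rw [← hx]; exact hrange x (Set.Ioc_subset_Icc_self hx2)
  -- integral of g
  have hIg : (∫ x in Set.Ioc a b, g x) = (b - a) * y := by
    have h1 : (∫ x in a..b, f x) = ∫ x in Set.Ioc a b, g x := by
      rw [intervalIntegral.integral_of_le hab']
      exact integral_congr_ae hfg
    rw [← h1, hy]; field_simp
  -- c ≤ y ≤ d
  have hcyd : c ≤ y ∧ y ≤ d := by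
    have h1 : (∫ x in Set.Ioc a b, (c:ℝ)) ≤ ∫ x in Set.Ioc a b, g x :=
      integral_mono_ae (integrable_const c) hgint (hR.mono fun x hx => hx.1)
    have h2 : (∫ x in Set.Ioc a b, g x) ≤ ∫ x in Set.Ioc a b, (d:ℝ) :=
      integral_mono_ae hgint (integrable_const d) (hR.mono fun x hx => hx.2)
    rw [integral_const] at h1 h2
    simp only [measureReal_restrict_apply_univ, measureReal_def, Measure.restrict_apply_univ, Real.volume_Ioc,
      ENNReal.toReal_ofReal hba.le, smul_eq_mul, hIg] at h1 h2
    constructor <;> nlinarith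
  obtain ⟨hcy, hyd⟩ := hcyd
  -- the splitting set
  set T : Set ℝ := {x | y ≤ g x} with hT_def
  have hT : MeasurableSet T := hgm.measurable measurableSet_Ici
  set A : Set ℝ := Set.Ioc a b ∩ T with hA_def
  set B : Set ℝ := Set.Ioc a b \ T with hB_def
  have hA : MeasurableSet A := measurableSet_Ioc.inter hT
  have hAfin : volume A ≠ ⊤ :=
    (lt_of_le_of_lt (measure_mono Set.inter_subset_left) (by simp [Real.volume_Ioc])).ne
  have hBfin : volume B ≠ ⊤ :=
    (lt_of_le_of_lt (measure_mono Set.diff_subset) (by simp [Real.volume_Ioc])).ne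
  set t : ℝ := (volume A).toReal with ht_def
  set s : ℝ := (volume B).toReal with hs_def
  have hts : t + s = b - a := by
    have h := measure_inter_add_diff (μ := volume) (Set.Ioc a b) hT
    rw [Real.volume_Ioc] at h
    have := congrArg ENNReal.toReal h
    rwa [ENNReal.toReal_add hAfin hBfin, ENNReal.toReal_ofReal hba.le] at this
  have htnn : 0 ≤ t := ENNReal.toReal_nonneg
  have hsnn : 0 ≤ s := ENNReal.toReal_nonneg
  -- integrability pieces
  have hgy : IntegrableOn (fun x => g x - y) (Set.Ioc a b) := hgint.sub (integrable_const y)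
  have hgyA : IntegrableOn (fun x => g x - y) A := hgy.mono_set Set.inter_subset_left
  have hgyB : IntegrableOn (fun x => g x - y) B := hgy.mono_set Set.diff_subset
  -- zero-sum property
  have hzero : (∫ x in Set.Ioc a b, (g x - y)) = 0 := by
    rw [integral_sub hgint (integrable_const y), integral_const,
      measureReal_restrict_apply_univ, measureReal_def, Real.volume_Ioc,
      ENNReal.toReal_ofReal hba.le, smul_eq_mul, hIg]
    ring
  have hsplit0 : (∫ x in A, (g x - y)) + (∫ x in B, (g x - y)) = 0 := by
    rw [integral_inter_add_diff hT hgy, hzero]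
  set P : ℝ := ∫ x in A, (g x - y) with hP_def
  have hQeq : (∫ x in B, (y - g x)) = P := by
    have : (∫ x in B, (y - g x)) = - ∫ x in B, (g x - y) := by
      rw [← integral_neg]; congr 1; funext x; ring
    rw [this]; linarith
  have hPnn : 0 ≤ P := setIntegral_nonneg hA fun x hx => sub_nonneg.2 hx.2
  -- bounds
  have hp : P ≤ (d - y) * t := by
    have h1 : P ≤ ∫ _x in A, (d - y) := by
      refine integral_mono_ae hgyA (integrableOn_const hAfin) ?_
      filter_upwards [ae_restrict_of_ae_restrict_of_subset Set.inter_subset_left hR]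
        with x hx
      exact sub_le_sub_right hx.2 y
    rw [integral_const, measureReal_restrict_apply_univ, measureReal_def, smul_eq_mul, ← ht_def] at h1
    linarith [h1]
  have hq : P ≤ (y - c) * s := by
    rw [← hQeq]
    have h1 : (∫ x in B, (y - g x)) ≤ ∫ _x in B, (y - c) := by
      refine integral_mono_ae ((integrableOn_const hBfin).sub
        (hgint.mono_set Set.diff_subset)) (integrableOn_const hBfin) ?_
      filter_upwards [ae_restrict_of_ae_restrict_of_subset Set.diff_subset hR]
        with x hx
      exact sub_le_sub_left hx.1 y
    rw [integral_const, measureReal_restrict_apply_univ, measureReal_def, smul_eq_mul, ← hs_def] at h1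
    linarith [h1]
  -- express the goal integral as 2 * P
  have hIabs : (∫ x in a..b, |f x - y|) = 2 * P := by
    have h0 : (∫ x in a..b, |f x - y|) = ∫ x in Set.Ioc a b, |g x - y| := by
      rw [intervalIntegral.integral_of_le hab']
      refine integral_congr_ae ?_
      filter_upwards [hfg] with x hx
      rw [hx]
    have hgyabs : IntegrableOn (fun x => |g x - y|) (Set.Ioc a b) := hgy.abs
    have hsplit : (∫ x in Set.Ioc a b, |g x - y|) =
        (∫ x in A, |g x - y|) + (∫ x in B, |g x - y|) :=
      (integral_inter_add_diff hT hgyabs).symm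
    have hAeq : (∫ x in A, |g x - y|) = P := by
      refine setIntegral_congr_fun hA fun x hx => ?_
      exact abs_of_nonneg (sub_nonneg.2 hx.2)
    have hBeq : (∫ x in B, |g x - y|) = ∫ x in B, (y - g x) := by
      refine setIntegral_congr_fun (measurableSet_Ioc.diff hT) fun x hx => ?_
      have : g x < y := lt_of_not_ge hx.2
      rw [abs_of_neg (by linarith)]; ring
    rw [h0, hsplit, hAeq, hBeq, hQeq]; ring
  rw [hIabs]
  -- final arithmetic (AM-GM)
  have hdy : 0 ≤ d - y := by linarith
  have hyc' : 0 ≤ y - c := by linarith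
  have hprod : P ^ 2 ≤ ((d - y) * t) * ((y - c) * s) := by
    have := mul_le_mul hp hq hPnn (mul_nonneg hdy htnn)
    nlinarith [this]
  have hAM1 : (d - y) * (y - c) ≤ ((d - c) / 2) ^ 2 := by nlinarith [sq_nonneg (d + c - 2 * y)]
  have hAM2 : t * s ≤ ((b - a) / 2) ^ 2 := by nlinarith [sq_nonneg (t - s)]
  have h3 : ((d - y) * (y - c)) * (t * s) ≤ ((d - c) / 2) ^ 2 * ((b - a) / 2) ^ 2 :=
    mul_le_mul hAM1 hAM2 (mul_nonneg htnn hsnn) (by positivity)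
  nlinarith [hprod, h3, hPnn, sq_nonneg (2 * P - (b - a) * (d - c) / 2)]
end

section
/- Let X be a real-valued random variable with density f. Then δ(X mod 1, U[0,1)) ≤ TV(f)/4, where TV(f) is the total variation of f restricted to the minimal integer-delineated interval containing its support. -/
open MeasureTheory ProbabilityTheory Set
open scoped ENNReal

/-- Total variation distance between two measures on `ℝ`:
`sup { |μ A − ν A| : A Borel }`. -/
noncomputable def tvDist (μ ν : MeasureTheory.Measure ℝ) : ℝ :=
  ⨆ A : {A : Set ℝ // MeasurableSet A}, |(μ A.1).toReal - (ν A.1).toReal|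

/-- The uniform distribution on a set `s ⊆ ℝ`. -/
noncomputable def unifMeasure (s : Set ℝ) : MeasureTheory.Measure ℝ :=
  (volume s)⁻¹ • volume.restrict s

/-- `inf { k ∈ ℤ : f([k,k+1)) ≠ {0} }`, as an extended real (possibly `±∞`). -/
noncomputable def tvLo (f : ℝ → ℝ) : EReal :=
  sInf {x : EReal | ∃ k : ℤ, x = ((k : ℝ) : EReal) ∧ f '' Set.Ico (k : ℝ) (k + 1) ≠ {0}}

/-- `sup { k ∈ ℤ : f((k−1,k]) ≠ {0} }`, as an extended real (possibly `±∞`). -/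
noncomputable def tvHi (f : ℝ → ℝ) : EReal :=
  sSup {x : EReal | ∃ k : ℤ, x = ((k : ℝ) : EReal) ∧ f '' Set.Ioc ((k : ℝ) - 1) k ≠ {0}}

/-- The total variation of `f` restricted to the minimal integer-delineated interval
containing its support: the supremum of `∑ |f(x_{n+1}) − f(x_n)|` over increasing
sequences in `(tvLo f, tvHi f)`. -/
noncomputable def TV (f : ℝ → ℝ) : ENNReal :=
  eVariationOn f {x : ℝ | tvLo f < (x : EReal) ∧ (x : EReal) < tvHi f}

def Sset (f : ℝ → ℝ) : Set ℝ := {x : ℝ | tvLo f < (x : EReal) ∧ (x : EReal) < tvHi f}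

lemma TV_eq (f : ℝ → ℝ) : TV f = eVariationOn f (Sset f) := rfl

lemma vanish_lo (f : ℝ → ℝ) (x : ℝ) (h : (x : EReal) < tvLo f) : f x = 0 := by
  by_contra h0
  have hx : x ∈ Set.Ico ((⌊x⌋ : ℝ)) ((⌊x⌋ : ℝ) + 1) := ⟨Int.floor_le x, Int.lt_floor_add_one x⟩
  have hmem : ((⌊x⌋ : ℝ) : EReal) ∈
      {z : EReal | ∃ k : ℤ, z = ((k : ℝ) : EReal) ∧ f '' Set.Ico (k : ℝ) (k + 1) ≠ {0}} := by
    refine ⟨⌊x⌋, rfl, fun hEq => h0 ?_⟩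
    have : f x ∈ f '' Set.Ico ((⌊x⌋ : ℝ)) ((⌊x⌋ : ℝ) + 1) := ⟨x, hx, rfl⟩
    rw [hEq] at this; exact this
  have h1 : tvLo f ≤ ((⌊x⌋ : ℝ) : EReal) := sInf_le hmem
  have h2 : ((⌊x⌋ : ℝ) : EReal) ≤ (x : EReal) := EReal.coe_le_coe_iff.2 (Int.floor_le x)
  exact absurd (lt_of_lt_of_le h (h1.trans h2)) (lt_irrefl _)

lemma vanish_hi (f : ℝ → ℝ) (x : ℝ) (h : tvHi f < (x : EReal)) : f x = 0 := by
  by_contra h0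
  have hx : x ∈ Set.Ioc ((⌈x⌉ : ℝ) - 1) ((⌈x⌉ : ℝ)) := by
    constructor
    · have := Int.ceil_lt_add_one x; linarith
    · exact Int.le_ceil x
  have hmem : ((⌈x⌉ : ℝ) : EReal) ∈
      {z : EReal | ∃ k : ℤ, z = ((k : ℝ) : EReal) ∧ f '' Set.Ioc ((k : ℝ) - 1) k ≠ {0}} := by
    refine ⟨⌈x⌉, rfl, fun hEq => h0 ?_⟩
    have : f x ∈ f '' Set.Ioc ((⌈x⌉ : ℝ) - 1) ((⌈x⌉ : ℝ)) := ⟨x, hx, rfl⟩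
    rw [hEq] at this; exact this
  have h1 : ((⌈x⌉ : ℝ) : EReal) ≤ tvHi f := le_sSup hmem
  have h2 : (x : EReal) ≤ ((⌈x⌉ : ℝ) : EReal) := EReal.coe_le_coe_iff.2 (Int.le_ceil x)
  exact absurd (lt_of_lt_of_le h (h2.trans h1)) (lt_irrefl _)

def Good (f : ℝ → ℝ) (k : ℤ) : Prop :=
  tvLo f ≤ ((k : ℝ) : EReal) ∧ (((k : ℝ) + 1 : ℝ) : EReal) ≤ tvHi f

lemma mem_Sset (f : ℝ → ℝ) {y : ℝ} (hy : y ∈ Set.Ioo (0:ℝ) 1) {k : ℤ} (hk : Good f k) :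
    y + (k : ℝ) ∈ Sset f := by
  constructor
  · refine lt_of_le_of_lt hk.1 (EReal.coe_lt_coe_iff.2 ?_)
    linarith [hy.1]
  · refine lt_of_lt_of_le (EReal.coe_lt_coe_iff.2 ?_) hk.2
    linarith [hy.2]

lemma not_good_zero (f : ℝ → ℝ) {y : ℝ} (hy : y ∈ Set.Ioo (0:ℝ) 1) {k : ℤ} (hk : ¬ Good f k) :
    f (y + (k : ℝ)) = 0 := by
  rw [Good, not_and_or] at hk
  rcases hk with hk | hk
  · push_neg at hk
    -- (k : EReal) < tvLo f; show (k+1 : EReal) ≤ tvLo f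
    have hle : (((k : ℝ) + 1 : ℝ) : EReal) ≤ tvLo f := by
      apply le_sInf
      rintro m ⟨km, rfl, hns⟩
      have h1 : tvLo f ≤ ((km : ℝ) : EReal) := sInf_le ⟨km, rfl, hns⟩
      have h2 : ((k : ℝ) : EReal) < ((km : ℝ) : EReal) := lt_of_lt_of_le hk h1
      have h3 : (k : ℝ) < (km : ℝ) := EReal.coe_lt_coe_iff.1 h2
      have h4 : (k : ℤ) < km := by exact_mod_cast h3
      have h5 : ((k : ℝ) + 1) ≤ (km : ℝ) := by exact_mod_cast h4
      exact EReal.coe_le_coe_iff.2 h5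
    apply vanish_lo f
    refine lt_of_lt_of_le (EReal.coe_lt_coe_iff.2 ?_) hle
    linarith [hy.2]
  · push_neg at hk
    have hle : tvHi f ≤ ((k : ℝ) : EReal) := by
      apply sSup_le
      rintro m ⟨km, rfl, hns⟩
      have h1 : ((km : ℝ) : EReal) ≤ tvHi f := le_sSup ⟨km, rfl, hns⟩
      have h2 : ((km : ℝ) : EReal) < (((k : ℝ) + 1 : ℝ) : EReal) := lt_of_le_of_lt h1 hk
      have h3 : (km : ℝ) < (k : ℝ) + 1 := EReal.coe_lt_coe_iff.1 h2
      have h4 : km ≤ k := by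
        have : km < k + 1 := by exact_mod_cast h3
        omega
      exact EReal.coe_le_coe_iff.2 (by exact_mod_cast h4)
    apply vanish_hi f
    refine lt_of_le_of_lt hle (EReal.coe_lt_coe_iff.2 ?_)
    linarith [hy.1]

lemma sumD (f : ℝ → ℝ) {y y' : ℝ} (hy : y ∈ Set.Ioo (0:ℝ) 1) (hy' : y' ∈ Set.Ioo (0:ℝ) 1)
    (hle : y' ≤ y) (K : Finset ℤ) (hK : ∀ k ∈ K, Good f k) :
    ∑ k ∈ K, ENNReal.ofReal |f (y + (k:ℝ)) - f (y' + (k:ℝ))| ≤ TV f := by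
  classical
  have main : ∀ K : Finset ℤ, (∀ k ∈ K, Good f k) →
      ∑ k ∈ K, ENNReal.ofReal |f (y + (k:ℝ)) - f (y' + (k:ℝ))| ≤
        eVariationOn f (Sset f ∩ ⋃ k ∈ K, Set.Icc (y' + (k:ℝ)) (y + (k:ℝ))) := by
    intro K
    induction K using Finset.induction_on_max with
    | empty => intro _; simp
    | insert a s ha ih =>
      intro hG
      have hanotin : a ∉ s := fun h => lt_irrefl a (ha a h)
      rw [Finset.sum_insert hanotin]
      have hGa : Good f a := hG a (Finset.mem_insert_self a s)
      have hterm : ENNReal.ofReal |f (y + (a:ℝ)) - f (y' + (a:ℝ))| ≤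
          eVariationOn f (Sset f ∩ Set.Icc (y' + (a:ℝ)) (y + (a:ℝ))) := by
        have h1 : y + (a:ℝ) ∈ Sset f ∩ Set.Icc (y' + (a:ℝ)) (y + (a:ℝ)) :=
          ⟨mem_Sset f hy hGa, by constructor <;> linarith⟩
        have h2 : y' + (a:ℝ) ∈ Sset f ∩ Set.Icc (y' + (a:ℝ)) (y + (a:ℝ)) :=
          ⟨mem_Sset f hy' hGa, by constructor <;> linarith⟩
        have := eVariationOn.edist_le f h1 h2
        rwa [edist_dist, Real.dist_eq] at this
      have hrest := ih (fun k hk => hG k (Finset.mem_insert_of_mem hk))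
      refine le_trans (add_le_add hterm hrest) ?_
      rw [add_comm]
      refine le_trans (eVariationOn.add_le_union f ?_) (le_of_eq ?_)
      · rintro x ⟨-, hx⟩ z ⟨-, hz⟩
        simp only [Set.mem_iUnion] at hx
        obtain ⟨k, hk, hxk⟩ := hx
        have hka : k < a := ha k hk
        have : (k:ℝ) + 1 ≤ (a:ℝ) := by exact_mod_cast hka
        have hx2 : x ≤ y + (k:ℝ) := hxk.2
        have hz2 : y' + (a:ℝ) ≤ z := hz.1
        have : y + (k:ℝ) ≤ y' + (a:ℝ) := by
          have h01 : y - y' < 1 := by linarith [hy.2, hy'.1]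
          linarith
        linarith
      · rw [← Set.inter_union_distrib_left]
        congr 1
        rw [Finset.set_biUnion_insert, Set.union_comm]
  refine le_trans (main K hK) ?_
  rw [TV_eq]
  exact eVariationOn.mono f Set.inter_subset_left

lemma keyC (f : ℝ → ℝ) (hf0 : ∀ x, 0 ≤ f x) {y y' : ℝ}
    (hy : y ∈ Set.Ioo (0:ℝ) 1) (hy' : y' ∈ Set.Ioo (0:ℝ) 1) :
    (∑' k : ℤ, ENNReal.ofReal (f (y + (k:ℝ)))) ≤
      (∑' k : ℤ, ENNReal.ofReal (f (y' + (k:ℝ)))) + TV f := by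
  classical
  rw [ENNReal.tsum_eq_iSup_sum]
  refine iSup_le fun K => ?_
  set K' := K.filter (fun k => Good f k) with hK'
  have hsub : K' ⊆ K := Finset.filter_subset _ _
  have hzero : ∀ k ∈ K, k ∉ K' → ENNReal.ofReal (f (y + (k:ℝ))) = 0 := by
    intro k hk hk'
    have : ¬ Good f k := fun hg => hk' (Finset.mem_filter.2 ⟨hk, hg⟩)
    rw [not_good_zero f hy this]; simp
  rw [← Finset.sum_subset hsub hzero]
  have hGood : ∀ k ∈ K', Good f k := fun k hk => (Finset.mem_filter.1 hk).2
  have habs : ∑ k ∈ K', ENNReal.ofReal |f (y + (k:ℝ)) - f (y' + (k:ℝ))| ≤ TV f := by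
    rcases le_total y' y with h | h
    · exact sumD f hy hy' h K' hGood
    · have := sumD f hy' hy h K' hGood
      simpa only [abs_sub_comm] using this
  have hterm : ∀ k ∈ K', ENNReal.ofReal (f (y + (k:ℝ))) ≤
      ENNReal.ofReal (f (y' + (k:ℝ))) + ENNReal.ofReal |f (y + (k:ℝ)) - f (y' + (k:ℝ))| := by
    intro k _
    rw [← ENNReal.ofReal_add (hf0 _) (abs_nonneg _)]
    apply ENNReal.ofReal_le_ofReal
    have := le_abs_self (f (y + (k:ℝ)) - f (y' + (k:ℝ)))
    linarith
  calc ∑ k ∈ K', ENNReal.ofReal (f (y + (k:ℝ)))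
      ≤ ∑ k ∈ K', (ENNReal.ofReal (f (y' + (k:ℝ))) +
          ENNReal.ofReal |f (y + (k:ℝ)) - f (y' + (k:ℝ))|) := Finset.sum_le_sum hterm
    _ = (∑ k ∈ K', ENNReal.ofReal (f (y' + (k:ℝ)))) +
          ∑ k ∈ K', ENNReal.ofReal |f (y + (k:ℝ)) - f (y' + (k:ℝ))| := Finset.sum_add_distrib
    _ ≤ (∑' k : ℤ, ENNReal.ofReal (f (y' + (k:ℝ)))) + TV f :=
        add_le_add (ENNReal.sum_le_tsum K') habs

lemma Sset_measurable (f : ℝ → ℝ) : MeasurableSet (Sset f) := by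
  have : OrdConnected (Sset f) := by
    constructor
    rintro x ⟨hx1, hx2⟩ z ⟨hz1, hz2⟩ w hw
    exact ⟨lt_of_lt_of_le hx1 (EReal.coe_le_coe_iff.2 hw.1),
      lt_of_le_of_lt (EReal.coe_le_coe_iff.2 hw.2) hz2⟩
  exact this.measurableSet

lemma f_aemeasurable (f : ℝ → ℝ) (hV : TV f ≠ ⊤) :
    AEMeasurable (fun x => ENNReal.ofReal (f x)) (volume : Measure ℝ) := by
  have hbv : BoundedVariationOn f (Sset f) := hV
  obtain ⟨p, q, hp, hq, hpq⟩ :=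
    hbv.locallyBoundedVariationOn.exists_monotoneOn_sub_monotoneOn
  have hS := Sset_measurable f
  have hpm : AEMeasurable p (volume.restrict (Sset f)) :=
    aemeasurable_restrict_of_monotoneOn hS hp
  have hqm : AEMeasurable q (volume.restrict (Sset f)) :=
    aemeasurable_restrict_of_monotoneOn hS hq
  have hfm : AEMeasurable f (volume.restrict (Sset f)) := by
    have heqf : f = fun x => p x - q x := by funext x; rw [hpq]; rfl
    exact heqf ▸ hpm.sub hqm
  have hind : AEMeasurable ((Sset f).indicator f) (volume : Measure ℝ) :=
    (aemeasurable_indicator_iff hS).2 hfm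
  have hN : (volume : Measure ℝ) {x : ℝ | (x : EReal) = tvLo f ∨ (x : EReal) = tvHi f} = 0 := by
    have hsub : {x : ℝ | (x : EReal) = tvLo f ∨ (x : EReal) = tvHi f}.Subsingleton ∨
        ({x : ℝ | (x : EReal) = tvLo f}.Subsingleton ∧
          {x : ℝ | (x : EReal) = tvHi f}.Subsingleton) := by
      right
      constructor <;> · intro u hu v hv; have := hu.trans hv.symm; exact_mod_cast this
    rcases hsub with h | ⟨h1, h2⟩
    · exact h.measure_zero _
    · have : {x : ℝ | (x : EReal) = tvLo f ∨ (x : EReal) = tvHi f} =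
          {x : ℝ | (x : EReal) = tvLo f} ∪ {x : ℝ | (x : EReal) = tvHi f} := rfl
      rw [this]
      exact measure_union_null (h1.measure_zero _) (h2.measure_zero _)
  have heq : f =ᵐ[volume] (Sset f).indicator f := by
    rw [Filter.eventuallyEq_iff_exists_mem]
    refine ⟨{x : ℝ | (x : EReal) = tvLo f ∨ (x : EReal) = tvHi f}ᶜ, ?_, ?_⟩
    · rw [mem_ae_iff, compl_compl]; exact hN
    · intro x hx
      simp only [mem_compl_iff, mem_setOf_eq, not_or] at hx
      by_cases hxS : x ∈ Sset f
      · rw [indicator_of_mem hxS]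
      · rw [indicator_of_notMem hxS]
        rw [Sset, mem_setOf_eq, not_and_or] at hxS
        rcases hxS with h | h
        · push_neg at h
          exact vanish_lo f x (lt_of_le_of_ne h hx.1)
        · push_neg at h
          exact vanish_hi f x (lt_of_le_of_ne h (fun he => hx.2 he.symm))
  have : AEMeasurable f (volume : Measure ℝ) := hind.congr heq.symm
  exact ENNReal.measurable_ofReal.comp_aemeasurable this

lemma fract_preimage_decomp {B : Set ℝ} (hBs : B ⊆ Set.Ico (0:ℝ) 1) :
    Int.fract ⁻¹' B = ⋃ k : ℤ, (fun x : ℝ => x - (k : ℝ)) ⁻¹' B := by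
  ext x
  simp only [mem_preimage, mem_iUnion]
  constructor
  · intro hx
    exact ⟨⌊x⌋, by rwa [show x - (⌊x⌋:ℝ) = Int.fract x from rfl]⟩
  · rintro ⟨k, hk⟩
    have h1 : Int.fract (x - (k:ℝ)) = Int.fract x := Int.fract_sub_intCast x k
    have h2 : Int.fract (x - (k:ℝ)) = x - (k:ℝ) :=
      Int.fract_eq_self.2 ⟨(hBs hk).1, (hBs hk).2⟩
    rwa [← h1, h2]

lemma map_fract_apply {Ω : Type*} [MeasureSpace Ω] [IsProbabilityMeasure (ℙ : Measure Ω)]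
    (X : Ω → ℝ) (hX : Measurable X) (g0 : ℝ → ℝ≥0∞) (hg0 : Measurable g0)
    (hmap : Measure.map X (ℙ : Measure Ω) = volume.withDensity g0)
    {B : Set ℝ} (hB : MeasurableSet B) (hBs : B ⊆ Set.Ico (0:ℝ) 1) :
    Measure.map (fun ω => Int.fract (X ω)) (ℙ : Measure Ω) B =
      ∫⁻ t in B, (∑' k : ℤ, g0 (t + (k : ℝ))) ∂volume := by
  have hfr : Measurable fun ω => Int.fract (X ω) := measurable_fract.comp hX
  rw [Measure.map_apply hfr hB]
  have hpre : (fun ω => Int.fract (X ω)) ⁻¹' B = X ⁻¹' (Int.fract ⁻¹' B) := rfl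
  rw [hpre, ← Measure.map_apply hX (measurable_fract hB), hmap,
    fract_preimage_decomp hBs]
  have hmeas : ∀ k : ℤ, MeasurableSet ((fun x : ℝ => x - (k : ℝ)) ⁻¹' B) :=
    fun k => hB.preimage (measurable_sub_const _)
  have hdisj : Pairwise (Function.onFun Disjoint fun k : ℤ => (fun x : ℝ => x - (k : ℝ)) ⁻¹' B) := by
    intro i j hij
    rw [Function.onFun, Set.disjoint_left]
    intro x hxi hxj
    have h1 := hBs hxi; have h2 := hBs hxj
    simp only [mem_preimage, mem_Ico] at h1 h2
    have : i = j := by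
      have hi1 := h1.1; have hi2 := h1.2; have hj1 := h2.1; have hj2 := h2.2
      have : (i : ℝ) = j := by
        have : |(i : ℝ) - j| < 1 := by rw [abs_lt]; constructor <;> linarith
        have := abs_lt.1 this
        have hint : (i : ℤ) = j := by
          have h3 : ((i - j : ℤ) : ℝ) = (i:ℝ) - (j:ℝ) := by push_cast; ring
          have : |((i - j : ℤ) : ℝ)| < 1 := by rw [h3, abs_lt]; constructor <;> linarith
          have h4 : |i - j| < 1 := by exact_mod_cast this
          have h5 : i - j = 0 := Int.abs_lt_one_iff.mp h4
          omega
        exact_mod_cast hint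
      exact_mod_cast this
    exact hij this
  rw [measure_iUnion hdisj hmeas]
  have hterm : ∀ k : ℤ, volume.withDensity g0 ((fun x : ℝ => x - (k : ℝ)) ⁻¹' B) =
      ∫⁻ t in B, g0 (t + (k : ℝ)) ∂volume := by
    intro k
    rw [withDensity_apply _ (hmeas k)]
    have hmp : MeasurePreserving (fun x : ℝ => x + (k : ℝ)) volume volume :=
      measurePreserving_add_right volume (k : ℝ)
    have hemb : MeasurableEmbedding (fun x : ℝ => x + (k : ℝ)) :=
      (MeasurableEquiv.addRight (k : ℝ)).measurableEmbedding
    have hcalc := hmp.setLIntegral_comp_preimage_emb hemb g0 ((fun x : ℝ => x - (k : ℝ)) ⁻¹' B)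
    have hBeq : (fun x : ℝ => x + (k : ℝ)) ⁻¹' ((fun x : ℝ => x - (k : ℝ)) ⁻¹' B) = B := by
      ext t; simp
    rw [hBeq] at hcalc
    exact hcalc.symm
  calc (∑' k : ℤ, volume.withDensity g0 ((fun x : ℝ => x - (k : ℝ)) ⁻¹' B))
      = ∑' k : ℤ, ∫⁻ t in B, g0 (t + (k : ℝ)) ∂volume := tsum_congr hterm
    _ = ∫⁻ t in B, (∑' k : ℤ, g0 (t + (k : ℝ))) ∂volume :=
        (lintegral_tsum fun k => (hg0.comp (measurable_add_const _)).aemeasurable).symm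

lemma map_fract_inter_Ico {Ω : Type*} [MeasureSpace Ω] [IsProbabilityMeasure (ℙ : Measure Ω)]
    (X : Ω → ℝ) (hX : Measurable X) {A : Set ℝ} (hA : MeasurableSet A) :
    Measure.map (fun ω => Int.fract (X ω)) (ℙ : Measure Ω) A =
      Measure.map (fun ω => Int.fract (X ω)) (ℙ : Measure Ω) (A ∩ Set.Ico 0 1) := by
  have hfr : Measurable fun ω => Int.fract (X ω) := measurable_fract.comp hX
  refine le_antisymm ?_ (measure_mono Set.inter_subset_left)
  have hdiff : Measure.map (fun ω => Int.fract (X ω)) (ℙ : Measure Ω) (A \ Set.Ico 0 1) = 0 := by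
    rw [Measure.map_apply hfr (hA.diff measurableSet_Ico)]
    convert measure_empty (μ := (ℙ : Measure Ω))
    ext ω
    simp only [mem_preimage, mem_diff, mem_empty_iff_false, iff_false]
    rintro ⟨-, h⟩
    exact h ⟨Int.fract_nonneg _, Int.fract_lt_one _⟩
  calc Measure.map (fun ω => Int.fract (X ω)) (ℙ : Measure Ω) A
      ≤ Measure.map (fun ω => Int.fract (X ω)) (ℙ : Measure Ω)
          ((A ∩ Set.Ico 0 1) ∪ (A \ Set.Ico 0 1)) := measure_mono (by
        rw [Set.inter_union_diff])
    _ ≤ _ + _ := measure_union_le _ _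
    _ = _ := by rw [hdiff, add_zero]

lemma map_fract_Ico {Ω : Type*} [MeasureSpace Ω] [IsProbabilityMeasure (ℙ : Measure Ω)]
    (X : Ω → ℝ) (hX : Measurable X) :
    Measure.map (fun ω => Int.fract (X ω)) (ℙ : Measure Ω) (Set.Ico 0 1) = 1 := by
  have hfr : Measurable fun ω => Int.fract (X ω) := measurable_fract.comp hX
  rw [Measure.map_apply hfr measurableSet_Ico]
  convert measure_univ (μ := (ℙ : Measure Ω))
  ext ω
  simp only [mem_preimage, mem_Ico, mem_univ, iff_true]
  exact ⟨Int.fract_nonneg _, Int.fract_lt_one _⟩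

/-- If `X` has density `f`, then `δ(X mod 1, U[0,1)) ≤ TV(f)/4`. -/
theorem stmt5 {Ω : Type*} [MeasureSpace Ω] [IsProbabilityMeasure (ℙ : Measure Ω)]
    (X : Ω → ℝ) (hX : Measurable X) (f : ℝ → ℝ) (hf0 : ∀ x, 0 ≤ f x)
    (hf : Measure.map X (ℙ : Measure Ω) = volume.withDensity (fun x => ENNReal.ofReal (f x))) :
    ENNReal.ofReal
        (tvDist (Measure.map (fun ω => Int.fract (X ω)) (ℙ : Measure Ω))
          (unifMeasure (Set.Ico 0 1))) ≤ TV f / 4 := by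
  by_cases hV : TV f = ⊤
  · rw [hV, ENNReal.top_div_of_ne_top (by norm_num : (4 : ENNReal) ≠ ⊤)]
    exact le_top
  -- notation
  set μm := Measure.map (fun ω => Int.fract (X ω)) (ℙ : Measure Ω) with hμm
  have hfr : Measurable fun ω => Int.fract (X ω) := measurable_fract.comp hX
  haveI : IsProbabilityMeasure μm := Measure.isProbabilityMeasure_map hfr.aemeasurable
  have hIco : volume (Set.Ico (0:ℝ) 1) = 1 := by simp [Real.volume_Ico]
  have hU : unifMeasure (Set.Ico (0:ℝ) 1) = volume.restrict (Set.Ico 0 1) := by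
    rw [unifMeasure, hIco]; simp
  -- measurable density
  have hae := f_aemeasurable f hV
  set g0 := hae.mk _ with hg0def
  have hg0 : Measurable g0 := hae.measurable_mk
  have hgeq : (fun x => ENNReal.ofReal (f x)) =ᵐ[volume] g0 := hae.ae_eq_mk
  have hmap : Measure.map X (ℙ : Measure Ω) = volume.withDensity g0 := by
    rw [hf]; exact withDensity_congr_ae hgeq
  set G : ℝ → ℝ≥0∞ := fun t => ∑' k : ℤ, g0 (t + (k:ℝ)) with hGdef
  have hGm : Measurable G :=
    Measurable.ennreal_tsum (fun k => hg0.comp (measurable_add_const _))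
  -- null bad set
  set Nm := toMeasurable volume {x | ENNReal.ofReal (f x) ≠ g0 x} with hNmdef
  have hNm_meas : MeasurableSet Nm := measurableSet_toMeasurable _ _
  have hNm_null : volume Nm = 0 := by
    rw [hNmdef, measure_toMeasurable]
    exact hgeq
  set badM : Set ℝ := ⋃ k : ℤ, (fun t : ℝ => t + (k:ℝ)) ⁻¹' Nm with hbaddef
  have hbad_meas : MeasurableSet badM :=
    MeasurableSet.iUnion (fun k => hNm_meas.preimage (measurable_add_const _))
  have hbad_null : volume badM = 0 := by
    refine measure_iUnion_null fun k => ?_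
    have hmp : MeasurePreserving (fun x : ℝ => x + (k : ℝ)) volume volume :=
      measurePreserving_add_right volume _
    rw [hmp.measure_preimage hNm_meas.nullMeasurableSet, hNm_null]
  set goodset : Set ℝ := Set.Ioo 0 1 \ badM with hgooddef
  have hgood_meas : MeasurableSet goodset := measurableSet_Ioo.diff hbad_meas
  have hkey : ∀ t ∈ goodset, ∀ t' ∈ goodset, G t ≤ G t' + TV f := by
    intro t ht t' ht'
    have hGH : ∀ u ∈ goodset, G u = ∑' k : ℤ, ENNReal.ofReal (f (u + (k:ℝ))) := by
      intro u hu
      refine tsum_congr fun k => ?_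
      have hnot : u + (k:ℝ) ∉ Nm := fun hmem => hu.2 (Set.mem_iUnion.2 ⟨k, hmem⟩)
      by_contra hne
      exact hnot (subset_toMeasurable _ _ (fun h => hne (by rw [h])))
    rw [hGH t ht, hGH t' ht']
    exact keyC f hf0 ht.1 ht'.1
  have hae_good : ∀ (C : Set ℝ), C ⊆ Set.Ico 0 1 →
      (∀ᵐ t ∂(volume.restrict C), t ∈ goodset) := by
    intro C hCs
    rw [Filter.Eventually, mem_ae_iff]
    have hcompl : {t : ℝ | t ∈ goodset}ᶜ = goodsetᶜ := rfl
    rw [hcompl, Measure.restrict_apply hgood_meas.compl]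
    refine measure_mono_null (fun t ht => ?_) (?_ : volume ({(0:ℝ)} ∪ badM) = 0)
    · rcases ht with ⟨htg, htC⟩
      simp only [mem_compl_iff, hgooddef, mem_diff, not_and, not_not] at htg
      by_cases htb : t ∈ badM
      · exact Or.inr htb
      · left
        have htIco := hCs htC
        have : t ∉ Set.Ioo (0:ℝ) 1 := fun hIoo => htb (htg hIoo)
        have h0 : t = 0 := by
          rcases htIco with ⟨h1, h2⟩
          rcases eq_or_lt_of_le h1 with he | hlt
          · exact he.symm
          · exact absurd ⟨hlt, h2⟩ this
        simp [h0]
    · exact measure_union_null (by simp) hbad_null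
  -- the key measure inequality
  have hT : ∀ B : Set ℝ, MeasurableSet B → B ⊆ Set.Ico 0 1 →
      volume (Set.Ico (0:ℝ) 1 \ B) * μm B ≤
        volume B * μm (Set.Ico (0:ℝ) 1 \ B) +
          volume B * volume (Set.Ico (0:ℝ) 1 \ B) * TV f := by
    intro B hB hBs
    set Bc := Set.Ico (0:ℝ) 1 \ B with hBcdef
    have hBc : MeasurableSet Bc := measurableSet_Ico.diff hB
    have hBcs : Bc ⊆ Set.Ico 0 1 := Set.diff_subset
    have hμB : μm B = ∫⁻ t in B, G t ∂volume :=
      map_fract_apply X hX g0 hg0 hmap hB hBs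
    have hμBc : μm Bc = ∫⁻ t in Bc, G t ∂volume :=
      map_fract_apply X hX g0 hg0 hmap hBc hBcs
    have step1 : ∀ᵐ t' ∂(volume.restrict Bc), μm B ≤ (G t' + TV f) * volume B := by
      filter_upwards [hae_good Bc hBcs] with t' ht'
      rw [hμB]
      calc ∫⁻ t in B, G t ∂volume ≤ ∫⁻ _t in B, (G t' + TV f) ∂volume := by
            refine lintegral_mono_ae ?_
            filter_upwards [hae_good B hBs] with t ht
            exact hkey t ht t' ht'
        _ = (G t' + TV f) * volume B := by rw [setLIntegral_const]
    have step2 : volume Bc * μm B ≤ ∫⁻ t' in Bc, ((G t' + TV f) * volume B) ∂volume := by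
      have h2 := lintegral_mono_ae step1
      rw [setLIntegral_const] at h2
      rw [mul_comm]
      exact h2
    have step3 : ∫⁻ t' in Bc, ((G t' + TV f) * volume B) ∂volume =
        volume B * μm Bc + volume B * volume Bc * TV f := by
      have hfun : (fun t' => (G t' + TV f) * volume B) =
          fun t' => G t' * volume B + TV f * volume B := by
        funext t'; ring
      rw [hfun, lintegral_add_right _ measurable_const,
        lintegral_mul_const _ hGm, setLIntegral_const, ← hμBc]
      ring
    exact step2.trans (le_of_eq step3)
  -- arithmetic consequences per measurable A
  have hbound : ∀ A : Set ℝ, MeasurableSet A →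
      |(μm A).toReal - ((volume.restrict (Set.Ico 0 1)) A).toReal| ≤ (TV f).toReal / 4 := by
    intro A hA
    set B := A ∩ Set.Ico (0:ℝ) 1 with hBdef
    have hB : MeasurableSet B := hA.inter measurableSet_Ico
    have hBs : B ⊆ Set.Ico 0 1 := Set.inter_subset_right
    set Bc := Set.Ico (0:ℝ) 1 \ B with hBcdef
    have hBc : MeasurableSet Bc := measurableSet_Ico.diff hB
    have hBcs : Bc ⊆ Set.Ico 0 1 := Set.diff_subset
    have hBcc : Set.Ico (0:ℝ) 1 \ Bc = B := Set.diff_diff_cancel_left hBs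
    have h1 := hT B hB hBs
    have h2 := hT Bc hBc hBcs
    rw [hBcc] at h2
    -- totals
    have hdisj : Disjoint B (Set.Ico (0:ℝ) 1 \ B) := Set.disjoint_sdiff_right
    have hunion : B ∪ Bc = Set.Ico (0:ℝ) 1 := Set.union_diff_cancel hBs
    have hvol : volume B + volume Bc = 1 := by
      rw [← measure_union hdisj hBc, hunion, hIco]
    have hμtot : μm B + μm Bc = 1 := by
      rw [← measure_union hdisj hBc, hunion, hμm, map_fract_Ico X hX]
    -- ENNReal bounds
    have e1 : μm B ≤ volume B + volume B * volume Bc * TV f := by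
      calc μm B = (volume B + volume Bc) * μm B := by rw [hvol, one_mul]
        _ = volume B * μm B + volume Bc * μm B := by ring
        _ ≤ volume B * μm B + (volume B * μm Bc + volume B * volume Bc * TV f) :=
            add_le_add le_rfl h1
        _ = volume B * (μm B + μm Bc) + volume B * volume Bc * TV f := by ring
        _ = volume B + volume B * volume Bc * TV f := by rw [hμtot, mul_one]
    have e2 : volume B ≤ μm B + volume B * volume Bc * TV f := by
      calc volume B = volume B * (μm B + μm Bc) := by rw [hμtot, mul_one]
        _ = volume B * μm B + volume B * μm Bc := by ring
        _ ≤ volume B * μm B + (volume Bc * μm B + volume Bc * volume B * TV f) :=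
            add_le_add le_rfl h2
        _ = (volume B + volume Bc) * μm B + volume B * volume Bc * TV f := by ring
        _ = μm B + volume B * volume Bc * TV f := by rw [hvol, one_mul]
    -- finiteness
    have hfa : volume B ≠ ⊤ := by
      refine ne_of_lt (lt_of_le_of_lt (measure_mono hBs) ?_); rw [hIco]; exact ENNReal.one_lt_top
    have hfb : volume Bc ≠ ⊤ := by
      refine ne_of_lt (lt_of_le_of_lt (measure_mono hBcs) ?_); rw [hIco]; exact ENNReal.one_lt_top
    have hfμ : μm B ≠ ⊤ := (measure_lt_top μm B).ne
    have hfprod : volume B * volume Bc * TV f ≠ ⊤ :=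
      ENNReal.mul_ne_top (ENNReal.mul_ne_top hfa hfb) hV
    -- to reals
    set a' := (volume B).toReal with ha'
    set b' := (volume Bc).toReal with hb'
    set m' := (μm B).toReal with hm'
    set V' := (TV f).toReal with hV'
    have r1 : m' ≤ a' + a' * b' * V' := by
      have := ENNReal.toReal_mono (by exact ENNReal.add_ne_top.2 ⟨hfa, hfprod⟩) e1
      rwa [ENNReal.toReal_add hfa hfprod, ENNReal.toReal_mul, ENNReal.toReal_mul] at this
    have r2 : a' ≤ m' + a' * b' * V' := by
      have := ENNReal.toReal_mono (by exact ENNReal.add_ne_top.2 ⟨hfμ, hfprod⟩) e2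
      rwa [ENNReal.toReal_add hfμ hfprod, ENNReal.toReal_mul, ENNReal.toReal_mul] at this
    have hsum : a' + b' = 1 := by
      have := congrArg ENNReal.toReal hvol
      rwa [ENNReal.toReal_add hfa hfb, ENNReal.toReal_one] at this
    have ha0 : 0 ≤ a' := ENNReal.toReal_nonneg
    have hb0 : 0 ≤ b' := ENNReal.toReal_nonneg
    have hV0 : 0 ≤ V' := ENNReal.toReal_nonneg
    have hab4 : a' * b' ≤ 1 / 4 := by nlinarith [sq_nonneg (a' - b')]
    have habs : |m' - a'| ≤ V' / 4 := by
      rw [abs_le]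
      constructor
      · nlinarith [mul_le_mul_of_nonneg_right hab4 hV0]
      · nlinarith [mul_le_mul_of_nonneg_right hab4 hV0]
    -- identify the quantities
    have hμA : μm A = μm B := map_fract_inter_Ico X hX hA
    have huA : (volume.restrict (Set.Ico 0 1)) A = volume B := by
      rw [Measure.restrict_apply hA]
    rw [hμA, huA]
    exact habs
  -- conclude
  have hsup : tvDist μm (unifMeasure (Set.Ico 0 1)) ≤ (TV f).toReal / 4 := by
    rw [tvDist, hU]
    refine Real.iSup_le (fun A => ?_) (by positivity)
    exact hbound A.1 A.2
  calc ENNReal.ofReal (tvDist μm (unifMeasure (Set.Ico 0 1)))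
      ≤ ENNReal.ofReal ((TV f).toReal / 4) := ENNReal.ofReal_le_ofReal hsup
    _ = ENNReal.ofReal (TV f).toReal / ENNReal.ofReal 4 :=
        ENNReal.ofReal_div_of_pos (by norm_num)
    _ = TV f / 4 := by
        rw [ENNReal.ofReal_toReal hV]
        norm_num
end

section
/- Fix b > 1. Let Y be uniformly distributed on [1,b] and let X = log_b Y. Then for every positive integer n, δ(nX mod 1, U[0,1)) ≤ (ln b)/(8n). -/
open MeasureTheory ProbabilityTheory Set

private lemma nonneg_of_deriv {f f' : ℝ → ℝ} (hd : ∀ x, HasDerivAt f (f' x) x)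
    (h0 : f 0 = 0) (hf' : ∀ x, 0 ≤ x → 0 ≤ f' x) : ∀ x, 0 ≤ x → 0 ≤ f x := by
  intro x hx
  have hmono : MonotoneOn f (Set.Ici 0) := by
    apply monotoneOn_of_deriv_nonneg (convex_Ici 0)
    · exact (Continuous.continuousOn (by
        exact (continuous_iff_continuousAt.2 fun y => (hd y).continuousAt)))
    · intro y hy
      exact ((hd y).differentiableAt).differentiableWithinAt
    · intro y hy
      rw [interior_Ici] at hy
      rw [(hd y).deriv]
      exact hf' y hy.le
  have := hmono (le_refl (0:ℝ)) hx hx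
  simpa [h0] using this

private lemma s1 : ∀ x : ℝ, 0 ≤ x → Real.sinh x ≤ x * Real.cosh x := by
  have h := nonneg_of_deriv (f := fun x => x * Real.cosh x - Real.sinh x)
    (f' := fun x => x * Real.sinh x)
    (fun x => by
      have : HasDerivAt (fun x : ℝ => x * Real.cosh x - Real.sinh x)
          (1 * Real.cosh x + x * Real.sinh x - Real.cosh x) x :=
        ((hasDerivAt_id x).mul (Real.hasDerivAt_cosh x)).sub (Real.hasDerivAt_sinh x)
      convert this using 1; ring)
    (by simp)
    (fun x hx => mul_nonneg hx (Real.sinh_nonneg_iff.2 hx))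
  intro x hx
  have hx' := h x hx
  linarith

private lemma s2 : ∀ x : ℝ, 0 ≤ x → x * Real.cosh x ≤ (1 + x^2/3) * Real.sinh x := by
  have h := nonneg_of_deriv (f := fun x => (1 + x^2/3) * Real.sinh x - x * Real.cosh x)
    (f' := fun x => (x/3) * (x * Real.cosh x - Real.sinh x))
    (fun x => by
      have : HasDerivAt (fun x : ℝ => (1 + x^2/3) * Real.sinh x - x * Real.cosh x)
          ((0 + 2*x^1/3) * Real.sinh x + (1 + x^2/3) * Real.cosh x -
            (1 * Real.cosh x + x * Real.sinh x)) x := by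
        exact (((hasDerivAt_const x (1:ℝ)).add (((hasDerivAt_pow 2 x).div_const 3))).mul
          (Real.hasDerivAt_sinh x)).sub ((hasDerivAt_id x).mul (Real.hasDerivAt_cosh x))
      convert this using 1; ring)
    (by simp)
    (fun x hx => mul_nonneg (by positivity) (by linarith [s1 x hx]))
  intro x hx
  have hx' := h x hx
  linarith

private lemma p2 : ∀ x : ℝ, 0 ≤ x → 0 ≤ 1/3 - Real.cosh x / 3 + (x/3) * Real.sinh x := by
  exact nonneg_of_deriv (f := fun x => 1/3 - Real.cosh x / 3 + (x/3) * Real.sinh x)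
    (f' := fun x => (x/3) * Real.cosh x)
    (fun x => by
      have : HasDerivAt (fun x : ℝ => 1/3 - Real.cosh x / 3 + (x/3) * Real.sinh x)
          (0 - Real.sinh x / 3 + ((1/3) * Real.sinh x + (x/3) * Real.cosh x)) x := by
        exact ((hasDerivAt_const x (1/3:ℝ)).sub ((Real.hasDerivAt_cosh x).div_const 3)).add
          (((hasDerivAt_id x).div_const 3).mul (Real.hasDerivAt_sinh x))
      convert this using 1; ring)
    (by simp)
    (fun x hx => mul_nonneg (by positivity) (Real.cosh_pos x).le)

private lemma p1 : ∀ x : ℝ, 0 ≤ x → 0 ≤ x/3 + (x/3) * Real.cosh x - (2/3) * Real.sinh x := by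
  exact nonneg_of_deriv (f := fun x => x/3 + (x/3) * Real.cosh x - (2/3) * Real.sinh x)
    (f' := fun x => 1/3 - Real.cosh x / 3 + (x/3) * Real.sinh x)
    (fun x => by
      have : HasDerivAt (fun x : ℝ => x/3 + (x/3) * Real.cosh x - (2/3) * Real.sinh x)
          (1/3 + ((1/3) * Real.cosh x + (x/3) * Real.sinh x) - (2/3) * Real.cosh x) x := by
        exact (((hasDerivAt_id x).div_const 3).add
          (((hasDerivAt_id x).div_const 3).mul (Real.hasDerivAt_cosh x))).sub
          ((Real.hasDerivAt_sinh x).const_mul (2/3))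
      convert this using 1; ring)
    (by simp)
    (fun x hx => by linarith [p2 x hx])

/-- cosh x ≤ 1 + x²/6 + (x/3) sinh x -/
private lemma pC : ∀ x : ℝ, 0 ≤ x → Real.cosh x ≤ 1 + x^2/6 + (x/3) * Real.sinh x := by
  have h := nonneg_of_deriv (f := fun x => 1 + x^2/6 + (x/3) * Real.sinh x - Real.cosh x)
    (f' := fun x => x/3 + (x/3) * Real.cosh x - (2/3) * Real.sinh x)
    (fun x => by
      have : HasDerivAt (fun x : ℝ => 1 + x^2/6 + (x/3) * Real.sinh x - Real.cosh x)
          ((0 + 2*x^1/6) + ((1/3) * Real.sinh x + (x/3) * Real.cosh x) - Real.sinh x) x := by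
        exact (((hasDerivAt_const x (1:ℝ)).add ((hasDerivAt_pow 2 x).div_const 6)).add
          (((hasDerivAt_id x).div_const 3).mul (Real.hasDerivAt_sinh x))).sub
          (Real.hasDerivAt_cosh x)
      convert this using 1; ring)
    (by simp)
    (fun x hx => by linarith [p1 x hx])
  intro x hx
  have hx' := h x hx
  linarith

/-- sinh x ≤ x * exp(x²/6) -/
private lemma sB : ∀ x : ℝ, 0 ≤ x → Real.sinh x ≤ x * Real.exp (x^2/6) := by
  have h := nonneg_of_deriv (f := fun x => x - Real.sinh x * Real.exp (-(x^2/6)))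
    (f' := fun x => 1 - (Real.cosh x + Real.sinh x * (-(2*x^1/6))) * Real.exp (-(x^2/6)))
    (fun x => by
      have hexp : HasDerivAt (fun x : ℝ => Real.exp (-(x^2/6)))
          (Real.exp (-(x^2/6)) * (-(2*x^1/6))) x := by
        exact (Real.hasDerivAt_exp _).comp x (((hasDerivAt_pow 2 x).div_const 6).neg)
      have : HasDerivAt (fun x : ℝ => x - Real.sinh x * Real.exp (-(x^2/6)))
          (1 - (Real.cosh x * Real.exp (-(x^2/6)) +
            Real.sinh x * (Real.exp (-(x^2/6)) * (-(2*x^1/6))))) x :=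
        (hasDerivAt_id x).sub ((Real.hasDerivAt_sinh x).mul hexp)
      convert this using 1; ring)
    (by simp)
    (fun x hx => by
      have h1 : Real.cosh x + Real.sinh x * (-(2*x^1/6)) ≤ 1 + x^2/6 := by
        have := pC x hx; nlinarith [this]
      have h2 : (1 + x^2/6 : ℝ) ≤ Real.exp (x^2/6) := by
        linarith [Real.add_one_le_exp (x^2/6)]
      have h3 : (Real.cosh x + Real.sinh x * (-(2*x^1/6))) * Real.exp (-(x^2/6))
          ≤ Real.exp (x^2/6) * Real.exp (-(x^2/6)) := by
        apply mul_le_mul_of_nonneg_right (le_trans h1 h2) (Real.exp_nonneg _)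
      rw [← Real.exp_add] at h3
      simp only [add_neg_cancel, Real.exp_zero] at h3
      linarith)
  intro x hx
  have hx' := h x hx
  have : Real.sinh x * Real.exp (-(x^2/6)) ≤ x := by linarith
  calc Real.sinh x = Real.sinh x * Real.exp (-(x^2/6)) * Real.exp (x^2/6) := by
        rw [mul_assoc, ← Real.exp_add]; simp
    _ ≤ x * Real.exp (x^2/6) := by
        apply mul_le_mul_of_nonneg_right this (Real.exp_nonneg _)

/-- The key pointwise inequality. -/
private lemma key_ineq {c : ℝ} (hc : 0 < c) {u : ℝ} (hu0 : 0 ≤ u) (hu1 : u ≤ 1) :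
    u * Real.exp c + (1 - u) - Real.exp (c * u) ≤ c / 8 * (Real.exp c - 1) := by
  set h := c / 2 with hh
  have hh0 : 0 < h := by positivity
  set E := Real.exp c - 1 with hE
  have hEpos : 0 < E := by
    have := Real.add_one_le_exp c
    have : 1 < Real.exp c := by
      calc (1:ℝ) < 1 + c := by linarith
        _ ≤ Real.exp c := by linarith [Real.add_one_le_exp c]
    linarith
  have hEc : E = 2 * Real.exp h * Real.sinh h := by
    have h1 : Real.exp h * Real.exp h = Real.exp c := by
      rw [← Real.exp_add, hh]; ring_nf
    have h2 : Real.exp h * Real.exp (-h) = 1 := by rw [← Real.exp_add]; simp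
    have h3 : 2 * Real.exp h * Real.sinh h
        = Real.exp h * Real.exp h - Real.exp h * Real.exp (-h) := by
      rw [Real.sinh_eq]; ring
    rw [h3, h1, h2, hE]
  have hEcpos : 0 < E / c := by positivity
  set s := Real.log (E / c) with hs
  -- Step 1 : tangent line bound
  have step1 : (E / c) * (1 + c * u - s) ≤ Real.exp (c * u) := by
    have := Real.add_one_le_exp (c * u - s)
    have hexp : Real.exp (c * u - s) = Real.exp (c * u) / (E / c) := by
      rw [Real.exp_sub, hs, Real.exp_log hEcpos]
    rw [hexp] at this
    have := (mul_le_mul_of_nonneg_left this hEcpos.le)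
    calc (E / c) * (1 + c * u - s) = (E/c) * (c * u - s + 1) := by ring
      _ ≤ (E/c) * (Real.exp (c*u) / (E/c)) := this
      _ = Real.exp (c * u) := by field_simp
  -- Step 2 : s ≤ h + h^2/6
  have step2 : s ≤ h + h^2/6 := by
    rw [hs]
    have hEq : E / c = Real.exp h * Real.sinh h / h := by
      rw [hEc, hh]; field_simp
    rw [hEq]
    have hb : Real.exp h * Real.sinh h / h ≤ Real.exp (h + h^2/6) := by
      rw [Real.exp_add]
      have := sB h hh0.le
      calc Real.exp h * Real.sinh h / h ≤ Real.exp h * (h * Real.exp (h^2/6)) / h := by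
            gcongr
        _ = Real.exp h * Real.exp (h^2/6) := by field_simp
    calc Real.log (Real.exp h * Real.sinh h / h) ≤ Real.log (Real.exp (h + h^2/6)) := by
          apply Real.log_le_log _ hb
          positivity
      _ = h + h^2/6 := Real.log_exp _
  -- Step 3 : E * (1 - s + c^2/8) ≥ c
  have hq : (0:ℝ) < 1 - h + h^2/3 := by nlinarith [sq_nonneg (h - 3/2)]
  have step3 : c ≤ E * (1 - s + c^2/8) := by
    have h1 : 1 - h + h^2/3 ≤ 1 - s + c^2/8 := by
      have : c^2/8 = h^2/2 := by rw [hh]; ring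
      linarith [step2]
    have h2 : E * (1 - h + h^2/3) ≤ E * (1 - s + c^2/8) :=
      mul_le_mul_of_nonneg_left h1 hEpos.le
    have h3 : c ≤ E * (1 - h + h^2/3) := by
      rw [hEc]
      have hA := s2 h hh0.le
      have : Real.sinh h * (1 - h + h^2/3) ≥ h * Real.cosh h - h * Real.sinh h := by
        nlinarith [hA]
      have hch : Real.cosh h - Real.sinh h = Real.exp (-h) := Real.cosh_sub_sinh h
      have : 2 * Real.exp h * Real.sinh h * (1 - h + h^2/3)
          ≥ 2 * Real.exp h * (h * (Real.cosh h - Real.sinh h)) := by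
        nlinarith [Real.exp_pos h]
      rw [hch] at this
      have hee : Real.exp h * Real.exp (-h) = 1 := by rw [← Real.exp_add]; simp
      calc c = 2 * h := by rw [hh]; ring
        _ = 2 * Real.exp h * (h * Real.exp (-h)) := by
            rw [show 2 * Real.exp h * (h * Real.exp (-h)) = 2 * h * (Real.exp h * Real.exp (-h)) by ring, hee]; ring
        _ ≤ 2 * Real.exp h * Real.sinh h * (1 - h + h^2/3) := this
    exact h3.trans h2
  -- conclude
  have hfin : u * Real.exp c + (1 - u) - Real.exp (c * u)
      ≤ 1 - (E / c) * (1 - s) := by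
    have : u * Real.exp c + (1 - u) = u * E + 1 := by rw [hE]; ring
    rw [this]
    have hid : (E/c) * (1 + c*u - s) = (E/c)*(1-s) + E*u := by field_simp; ring
    linarith [step1, hid.symm.le, hid.le]
  have : 1 - (E / c) * (1 - s) ≤ c/8 * E := by
    have hx : (c/8*E + (E/c)*(1-s) - 1) * c = E*(1 - s + c^2/8) - c := by
      field_simp; ring
    have h9 : 0 ≤ E*(1 - s + c^2/8) - c := by linarith
    nlinarith [h9, hx, hc]
  linarith
section Part2
variable {c : ℝ}

private lemma Epos (hc : 0 < c) : 0 < Real.exp c - 1 := by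
  nlinarith [Real.add_one_le_exp c]

/-- derivative of G -/
private lemma hasDerivG (hc : 0 < c) (u : ℝ) :
    HasDerivAt (fun u => (Real.exp (c*u) - 1)/(Real.exp c - 1))
      (c * Real.exp (c*u) / (Real.exp c - 1)) u := by
  have h1 : HasDerivAt (fun u : ℝ => Real.exp (c*u)) (Real.exp (c*u) * (c*1)) u := by
    exact HasDerivAt.exp ((hasDerivAt_id u).const_mul c)
  have h2 := (h1.sub_const 1).div_const (Real.exp c - 1)
  exact h2.congr_deriv (by ring)

private lemma contg : Continuous (fun u => c * Real.exp (c*u) / (Real.exp c - 1) - 1) := by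
  continuity

private lemma intg {s : Set ℝ} (hs : MeasurableSet s) (hsub : s ⊆ Set.Icc 0 1) :
    IntegrableOn (fun u => c * Real.exp (c*u) / (Real.exp c - 1) - 1) s volume := by
  exact (contg.integrableOn_Icc (a := 0) (b := 1)).mono_set hsub

/-- Integral of g - 1 over Ico a b. -/
private lemma int_Ico (hc : 0 < c) {a b : ℝ} (hab : a ≤ b) :
    ∫ u in Set.Ico a b, (c * Real.exp (c*u) / (Real.exp c - 1) - 1)
      = ((Real.exp (c*b) - 1)/(Real.exp c - 1) - b)
        - ((Real.exp (c*a) - 1)/(Real.exp c - 1) - a) := by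
  rw [MeasureTheory.integral_Ico_eq_integral_Ioo,
    ← MeasureTheory.integral_Ioc_eq_integral_Ioo, ← intervalIntegral.integral_of_le hab]
  apply intervalIntegral.integral_eq_sub_of_hasDerivAt
  · intro x _
    exact (hasDerivG hc x).sub ((hasDerivAt_id x))
  · exact contg.intervalIntegrable a b

/-- The main integral bound. -/
private lemma integral_bound (hc : 0 < c) {E : Set ℝ} (hE : MeasurableSet E)
    (hEsub : E ⊆ Set.Ico 0 1) :
    |∫ u in E, (c * Real.exp (c*u) / (Real.exp c - 1) - 1)| ≤ c/8 := by
  set E1 := Real.exp c - 1 with hE1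
  have hE1pos : 0 < E1 := Epos hc
  set u₀ := Real.log (E1/c) / c with hu₀
  have hrpos : (0:ℝ) < E1 / c := by positivity
  have hu₀0 : 0 ≤ u₀ := by
    apply div_nonneg _ hc.le
    apply Real.log_nonneg
    rw [le_div_iff₀ hc]
    have := Real.add_one_le_exp c
    simp only [hE1]
    linarith
  have hu₀1 : u₀ ≤ 1 := by
    rw [hu₀, div_le_one hc]
    calc Real.log (E1/c) ≤ Real.log (Real.exp c) := by
          apply Real.log_le_log hrpos
          rw [div_le_iff₀ hc]
          have h1 : Real.exp (-c) * Real.exp c = 1 := by rw [← Real.exp_add]; simp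
          have h2 := mul_le_mul_of_nonneg_right (Real.add_one_le_exp (-c)) (Real.exp_pos c).le
          simp only [hE1]
          nlinarith [h1, h2]
      _ = c := Real.log_exp c
  -- g ≤ 1 below u₀, g ≥ 1 above
  have hglt : ∀ u : ℝ, u ≤ u₀ → c * Real.exp (c*u) / E1 - 1 ≤ 0 := by
    intro u hu
    rw [sub_nonpos, div_le_one hE1pos]
    have : Real.exp (c*u) ≤ E1/c := by
      rw [← Real.exp_log hrpos]
      apply Real.exp_le_exp.2
      calc c * u ≤ c * u₀ := by nlinarith
        _ = Real.log (E1/c) := by rw [hu₀]; field_simp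
    have h4 : c * (E1/c) = E1 := by field_simp
    nlinarith [mul_le_mul_of_nonneg_left this hc.le, h4]
  have hggt : ∀ u : ℝ, u₀ ≤ u → 0 ≤ c * Real.exp (c*u) / E1 - 1 := by
    intro u hu
    rw [sub_nonneg, le_div_iff₀ hE1pos]
    have : E1/c ≤ Real.exp (c*u) := by
      rw [← Real.exp_log hrpos]
      apply Real.exp_le_exp.2
      calc Real.log (E1/c) = c * u₀ := by rw [hu₀]; field_simp
        _ ≤ c * u := by nlinarith
    have h4 : c * (E1/c) = E1 := by field_simp
    nlinarith [mul_le_mul_of_nonneg_left this hc.le, h4]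
  -- the value D
  have hG1 : (Real.exp (c*1) - 1)/E1 = 1 := by
    rw [mul_one]; field_simp
    exact hE1.symm
  have hG0 : (Real.exp (c*0) - 1)/E1 = 0 := by simp
  have hD : u₀ - (Real.exp (c*u₀) - 1)/E1 ≤ c/8 := by
    have hk := key_ineq hc (u := u₀) hu₀0 hu₀1
    have h2 : (u₀ - (Real.exp (c*u₀) - 1)/E1) * E1 = u₀ * E1 - (Real.exp (c*u₀) - 1) := by
      field_simp
    have h3 : u₀ * E1 - (Real.exp (c*u₀) - 1)
        = u₀ * Real.exp c + (1 - u₀) - Real.exp (c * u₀) := by rw [hE1]; ring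
    nlinarith [hk, h2, h3, hE1pos, hE1]
  have hDpos1 : ∫ u in Set.Ico u₀ 1, (c * Real.exp (c*u) / E1 - 1)
      = u₀ - (Real.exp (c*u₀) - 1)/E1 := by
    rw [int_Ico hc hu₀1, hG1]; ring
  have hDpos0 : ∫ u in Set.Ico 0 u₀, (c * Real.exp (c*u) / E1 - 1)
      = (Real.exp (c*u₀) - 1)/E1 - u₀ := by
    rw [int_Ico hc hu₀0, hG0]; ring
  -- split E
  have hsplit : E = (E ∩ Set.Ico 0 u₀) ∪ (E ∩ Set.Ico u₀ 1) := by
    rw [← Set.inter_union_distrib_left, Set.Ico_union_Ico_eq_Ico hu₀0 hu₀1]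
    exact (Set.inter_eq_left.2 hEsub).symm
  have hdisj : Disjoint (E ∩ Set.Ico 0 u₀) (E ∩ Set.Ico u₀ 1) :=
    (Set.Ico_disjoint_Ico_same).mono inf_le_right inf_le_right
  have hmeas1 : MeasurableSet (E ∩ Set.Ico 0 u₀) := hE.inter measurableSet_Ico
  have hmeas2 : MeasurableSet (E ∩ Set.Ico u₀ 1) := hE.inter measurableSet_Ico
  have hsub1 : E ∩ Set.Ico 0 u₀ ⊆ Set.Icc 0 1 :=
    fun x hx => Set.Ico_subset_Icc_self (hEsub hx.1)
  have hsub2 : E ∩ Set.Ico u₀ 1 ⊆ Set.Icc 0 1 :=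
    fun x hx => Set.Ico_subset_Icc_self (hEsub hx.1)
  have hint1 := intg (c := c) hmeas1 hsub1
  have hint2 := intg (c := c) hmeas2 hsub2
  have hIci : MeasurableSet (Set.Ico u₀ (1:ℝ)) := measurableSet_Ico
  have hintI2 : IntegrableOn (fun u => c * Real.exp (c*u) / E1 - 1) (Set.Ico u₀ 1) volume :=
    intg (c := c) measurableSet_Ico (Set.Ico_subset_Icc_self.trans (Set.Icc_subset_Icc hu₀0 le_rfl))
  have hintI1 : IntegrableOn (fun u => c * Real.exp (c*u) / E1 - 1) (Set.Ico 0 u₀) volume :=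
    intg (c := c) measurableSet_Ico (Set.Ico_subset_Icc_self.trans (Set.Icc_subset_Icc le_rfl hu₀1))
  have hEsplit : ∫ u in E, (c * Real.exp (c*u) / E1 - 1)
      = (∫ u in E ∩ Set.Ico 0 u₀, (c * Real.exp (c*u) / E1 - 1))
        + ∫ u in E ∩ Set.Ico u₀ 1, (c * Real.exp (c*u) / E1 - 1) := by
    conv_lhs => rw [hsplit]
    exact MeasureTheory.setIntegral_union hdisj hmeas2 hint1 hint2
  rw [abs_le]
  constructor
  · -- lower bound : -(c/8) ≤ ∫
    have hterm2 : 0 ≤ ∫ u in E ∩ Set.Ico u₀ 1, (c * Real.exp (c*u) / E1 - 1) := by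
      apply MeasureTheory.setIntegral_nonneg hmeas2
      intro x hx
      exact hggt x hx.2.1
    have hterm1 : (∫ u in Set.Ico 0 u₀, (c * Real.exp (c*u) / E1 - 1))
        ≤ ∫ u in E ∩ Set.Ico 0 u₀, (c * Real.exp (c*u) / E1 - 1) := by
      have := MeasureTheory.setIntegral_mono_set
        (s := E ∩ Set.Ico 0 u₀) (t := Set.Ico 0 u₀)
        (f := fun u => -(c * Real.exp (c*u) / E1 - 1)) (hintI1.neg)
        ((MeasureTheory.ae_restrict_iff' measurableSet_Ico).2
          (Filter.Eventually.of_forall (fun x hx => by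
            have := hglt x hx.2.le; simp; linarith)))
        (HasSubset.Subset.eventuallyLE (Set.inter_subset_right))
      rw [MeasureTheory.integral_neg, MeasureTheory.integral_neg] at this
      linarith
    have := hDpos0 ▸ hterm1
    rw [hEsplit]
    -- -(c/8) ≤ term1 + term2 ; term1 ≥ G(u₀) - u₀ ≥ -(c/8), term2 ≥ 0
    have hlow : -(c/8) ≤ (Real.exp (c*u₀) - 1)/E1 - u₀ := by linarith
    linarith
  · have hterm1 : (∫ u in E ∩ Set.Ico 0 u₀, (c * Real.exp (c*u) / E1 - 1)) ≤ 0 := by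
      apply MeasureTheory.setIntegral_nonpos hmeas1
      intro x hx
      exact hglt x hx.2.2.le
    have hterm2 : (∫ u in E ∩ Set.Ico u₀ 1, (c * Real.exp (c*u) / E1 - 1))
        ≤ ∫ u in Set.Ico u₀ 1, (c * Real.exp (c*u) / E1 - 1) := by
      apply MeasureTheory.setIntegral_mono_set hintI2
      · exact (MeasureTheory.ae_restrict_iff' measurableSet_Ico).2
          (Filter.Eventually.of_forall (fun x hx => hggt x hx.1))
      · exact HasSubset.Subset.eventuallyLE (Set.inter_subset_right)
    rw [hEsplit]
    linarith [hDpos1 ▸ hterm2, hD]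
end Part2
section Part3

private lemma union_Ico_mono (a : ℕ → ℝ) (ha : Monotone a) (m : ℕ) :
    (⋃ k ∈ Finset.range m, Set.Ico (a k) (a (k+1))) = Set.Ico (a 0) (a m) := by
  induction m with
  | zero => simp
  | succ m ih =>
    rw [Finset.range_add_one, Finset.set_biUnion_insert, ih, Set.union_comm,
      Set.Ico_union_Ico_eq_Ico (ha (Nat.zero_le m)) (ha (Nat.le_succ m))]

/-- For `b > 1`, `Y ∼ U[1,b]` and `X = log_b Y`:
`δ(nX mod 1, U[0,1)) ≤ (ln b)/(8n)` for all positive integers `n`. -/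
theorem stmt9 {Ω : Type*} [MeasureSpace Ω] [IsProbabilityMeasure (ℙ : Measure Ω)]
    (b : ℝ) (hb : 1 < b) (Y : Ω → ℝ) (hY : Measurable Y)
    (hYunif : Measure.map Y (ℙ : Measure Ω) = unifMeasure (Set.Icc 1 b))
    (X : Ω → ℝ) (hX : X = fun ω => Real.logb b (Y ω))
    (n : ℕ) (hn : 0 < n) :
    tvDist (Measure.map (fun ω => Int.fract ((n : ℝ) * X ω)) (ℙ : Measure Ω))
        (unifMeasure (Set.Ico 0 1)) ≤ Real.log b / (8 * n) := by
  have hb0 : (0:ℝ) < b := lt_trans one_pos hb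
  have hlb : 0 < Real.log b := Real.log_pos hb
  have hn0 : (0:ℝ) < n := by exact_mod_cast hn
  set c : ℝ := Real.log b / n with hcdef
  have hc : 0 < c := by positivity
  have hcn : c * n = Real.log b := by rw [hcdef]; field_simp
  have hbm1 : (0:ℝ) < b - 1 := by linarith
  -- the transformation T
  set T : ℝ → ℝ := fun y => Int.fract ((n:ℝ) * Real.logb b y) with hTdef
  have hT : Measurable T := by
    apply Measurable.fract
    apply Measurable.mul measurable_const
    unfold Real.logb
    exact Real.measurable_log.div_const _
  -- pushforward identification
  have hmapT : Measure.map (fun ω => Int.fract ((n:ℝ) * X ω)) (ℙ : Measure Ω)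
      = Measure.map T (unifMeasure (Set.Icc 1 b)) := by
    have hco : (fun ω => Int.fract ((n:ℝ) * X ω)) = T ∘ Y := by
      funext ω
      simp only [hX]
      rfl
    rw [hco, ← Measure.map_map hT hY, hYunif]
  rw [hmapT]
  -- the sequence of interval endpoints
  set a : ℕ → ℝ := fun k => Real.exp (c * k) with hadef
  have haS : StrictMono a := by
    intro i j hij
    apply Real.exp_lt_exp.2
    have : (i:ℝ) < j := by exact_mod_cast hij
    nlinarith
  have ha0 : a 0 = 1 := by simp [hadef]
  have han : a n = b := by
    simp only [hadef]
    rw [hcn, Real.exp_log hb0]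
  -- Nonempty instance for the sup
  have : Nonempty {A : Set ℝ // MeasurableSet A} := ⟨⟨∅, MeasurableSet.empty⟩⟩
  apply ciSup_le
  rintro ⟨A, hA⟩
  simp only
  -- set up
  set E : Set ℝ := A ∩ Set.Ico 0 1 with hEdef
  have hEm : MeasurableSet E := hA.inter measurableSet_Ico
  have hEsub : E ⊆ Set.Ico 0 1 := Set.inter_subset_right
  have hEsub' : E ⊆ Set.Icc 0 1 := hEsub.trans Set.Ico_subset_Icc_self
  -- RHS measure
  have hnu : (unifMeasure (Set.Ico 0 1)) A = volume E := by
    unfold unifMeasure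
    rw [Measure.smul_apply, Measure.restrict_apply hA]
    simp [Real.volume_Ico]
    rfl
  -- LHS measure
  set S : Set ℝ := T ⁻¹' A with hSdef
  have hSm : MeasurableSet S := hT hA
  have hmuA : (Measure.map T (unifMeasure (Set.Icc 1 b))) A
      = (ENNReal.ofReal (b-1))⁻¹ * volume (S ∩ Set.Icc 1 b) := by
    rw [Measure.map_apply hT hA]
    unfold unifMeasure
    rw [Measure.smul_apply, Measure.restrict_apply hSm, Real.volume_Icc]
    rfl
  -- pieces
  have hpiece : ∀ k : ℕ, k < n →
      S ∩ Set.Ico (a k) (a (k+1)) = (fun u => Real.exp (c*(u + k))) '' E := by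
    intro k hk
    ext y
    constructor
    · rintro ⟨hyS, hy1, hy2⟩
      have hy0 : 0 < y := lt_of_lt_of_le (Real.exp_pos _) hy1
      have hlog1 : c * k ≤ Real.log y := (Real.le_log_iff_exp_le hy0).2 hy1
      have hy2' : y < Real.exp (c*((k:ℝ)+1)) := by
        simpa [hadef] using hy2
      have hlog2 : Real.log y < c * ((k:ℝ)+1) := (Real.log_lt_iff_lt_exp hy0).2 hy2'
      set u : ℝ := (n:ℝ) * Real.logb b y - k with hudef
      have hlogb : (n:ℝ) * Real.logb b y = Real.log y / c := by
        unfold Real.logb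
        rw [hcdef]
        field_simp
      have hu0 : 0 ≤ u := by
        rw [hudef, hlogb, le_sub_iff_add_le, zero_add, le_div_iff₀ hc]
        linarith
      have hu1 : u < 1 := by
        rw [hudef, hlogb, sub_lt_iff_lt_add, div_lt_iff₀ hc]
        nlinarith
      have hTy : T y = u := by
        show Int.fract ((n:ℝ) * Real.logb b y) = u
        have : (n:ℝ) * Real.logb b y = u + (k:ℕ) := by rw [hudef]; push_cast; ring
        rw [this, Int.fract_add_natCast, Int.fract_eq_self.2 ⟨hu0, hu1⟩]
      refine ⟨u, ⟨?_, hu0, hu1⟩, ?_⟩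
      · rw [← hTy]; exact hyS
      · show Real.exp (c * (u + k)) = y
        have : c * (u + k) = Real.log y := by
          rw [hudef, hlogb]; field_simp; ring
        rw [this, Real.exp_log hy0]
    · rintro ⟨u, ⟨huA, hu0, hu1⟩, rfl⟩
      have hmem : (n:ℝ) * Real.logb b (Real.exp (c * (u + k))) = u + k := by
        unfold Real.logb
        rw [Real.log_exp, hcdef]
        field_simp
      refine ⟨?_, ?_, ?_⟩
      · show T _ ∈ A
        show Int.fract ((n:ℝ) * Real.logb b (Real.exp (c * (u + k)))) ∈ A
        rw [hmem]
        have : u + (k:ℝ) = u + ((k:ℕ):ℝ) := by norm_num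
        rw [this, Int.fract_add_natCast, Int.fract_eq_self.2 ⟨hu0, hu1⟩]
        exact huA
      · show a k ≤ Real.exp (c * (u + k))
        apply Real.exp_le_exp.2
        nlinarith
      · show Real.exp (c * (u + k)) < a (k+1)
        apply Real.exp_lt_exp.2
        push_cast
        nlinarith
  -- volume of each piece as an integral
  have hvol_piece : ∀ k : ℕ, k < n →
      (volume (S ∩ Set.Ico (a k) (a (k+1)))).toReal
        = ∫ u in E, c * Real.exp (c * (u + k)) := by
    intro k hk
    rw [hpiece k hk]
    have h1 : (volume ((fun u => Real.exp (c*(u + k))) '' E)).toReal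
        = ∫ x in (fun u => Real.exp (c*(u + k))) '' E, (1:ℝ) := by
      rw [MeasureTheory.setIntegral_const]; simp
      rfl
    rw [h1]
    have hderiv : ∀ x ∈ E, HasDerivWithinAt (fun u => Real.exp (c*(u + k)))
        (c * Real.exp (c*(x + k))) E x := by
      intro x _
      have h2 : HasDerivAt (fun u : ℝ => c*(u + k)) (c * 1) x :=
        ((hasDerivAt_id x).add_const _).const_mul c
      have h3 := h2.exp
      have : HasDerivAt (fun u => Real.exp (c*(u + k))) (c * Real.exp (c*(x + k))) x := by
        convert h3 using 1; ring
      exact this.hasDerivWithinAt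
    have hinj : Set.InjOn (fun u => Real.exp (c*(u + k))) E := by
      intro x _ y _ hxy
      simp only at hxy
      have h5 := Real.exp_injective hxy
      have h6 : x + (k:ℝ) = y + k := mul_left_cancel₀ (ne_of_gt hc) h5
      linarith
    rw [MeasureTheory.integral_image_eq_integral_abs_deriv_smul hEm hderiv hinj]
    apply MeasureTheory.setIntegral_congr_fun hEm
    intro x _
    simp only [smul_eq_mul, mul_one]
    rw [abs_of_pos (by positivity)]
  -- decompose
  have hIco : Set.Ico (1:ℝ) b = ⋃ k ∈ Finset.range n, Set.Ico (a k) (a (k+1)) := by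
    rw [union_Ico_mono a haS.monotone n, ha0, han]
  have hicc_ico : volume (S ∩ Set.Icc 1 b) = volume (S ∩ Set.Ico 1 b) := by
    apply MeasureTheory.measure_congr
    exact (Filter.EventuallyEq.refl _ _).inter (MeasureTheory.Ico_ae_eq_Icc).symm
  have hdecomp : volume (S ∩ Set.Ico 1 b)
      = ∑ k ∈ Finset.range n, volume (S ∩ Set.Ico (a k) (a (k+1))) := by
    rw [hIco, Set.inter_iUnion₂]
    apply MeasureTheory.measure_biUnion_finset
    · intro i hi j hj hij
      have hd : Disjoint (Set.Ico (a i) (a (i+1))) (Set.Ico (a j) (a (j+1))) := by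
        rcases Nat.lt_or_ge i j with h | h
        · apply Set.Ico_disjoint_Ico.2
          calc min (a (i+1)) (a (j+1)) ≤ a (i+1) := min_le_left _ _
            _ ≤ a j := haS.monotone h
            _ ≤ max (a i) (a j) := le_max_right _ _
        · have h' : j < i := lt_of_le_of_ne h (Ne.symm hij)
          apply Set.Ico_disjoint_Ico.2
          calc min (a (i+1)) (a (j+1)) ≤ a (j+1) := min_le_right _ _
            _ ≤ a i := haS.monotone h'
            _ ≤ max (a i) (a j) := le_max_left _ _
      exact (hd.mono (Set.inter_subset_right) (Set.inter_subset_right))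
    · intro k _
      exact hSm.inter measurableSet_Ico
  have hfin : ∀ k ∈ Finset.range n, volume (S ∩ Set.Ico (a k) (a (k+1))) ≠ ⊤ := by
    intro k _
    apply ne_of_lt
    apply lt_of_le_of_lt (MeasureTheory.measure_mono Set.inter_subset_right)
    rw [Real.volume_Ico]
    exact ENNReal.ofReal_lt_top
  -- integrability
  have hgint : ∀ k : ℕ, IntegrableOn (fun u => c * Real.exp (c * (u + k))) E volume := by
    intro k
    refine (Continuous.integrableOn_Icc (a := (0:ℝ)) (b := 1) ?_).mono_set hEsub'
    exact continuous_const.mul (Real.continuous_exp.comp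
      (continuous_const.mul (continuous_id.add continuous_const)))
  -- sum of integrals
  have hsum : ∑ k ∈ Finset.range n, ∫ u in E, c * Real.exp (c * (u + k))
      = (b - 1) * ∫ u in E, c * Real.exp (c*u) / (Real.exp c - 1) := by
    rw [← MeasureTheory.integral_finset_sum _ (fun k _ => hgint k),
      ← MeasureTheory.integral_const_mul]
    apply MeasureTheory.setIntegral_congr_fun hEm
    intro u _
    have hexpc1 : Real.exp c ≠ 1 := by
      intro h
      have := (Real.exp_eq_one_iff _).1 h
      exact absurd this (ne_of_gt hc)
    have hgeom : ∑ k ∈ Finset.range n, (Real.exp c)^k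
        = ((Real.exp c)^n - 1)/(Real.exp c - 1) := geom_sum_eq hexpc1 n
    have hterm : ∀ k : ℕ, c * Real.exp (c * (u + k)) = c * Real.exp (c*u) * (Real.exp c)^k := by
      intro k
      rw [← Real.exp_nat_mul, mul_assoc, ← Real.exp_add]
      ring_nf
    have hexpb : (Real.exp c)^n = b := by
      rw [← Real.exp_nat_mul]
      rw [show (n:ℝ) * c = c * n by ring, hcn, Real.exp_log hb0]
    calc ∑ k ∈ Finset.range n, c * Real.exp (c * (u + k))
        = ∑ k ∈ Finset.range n, c * Real.exp (c*u) * (Real.exp c)^k := by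
          apply Finset.sum_congr rfl; intro k _; exact hterm k
      _ = c * Real.exp (c*u) * (((Real.exp c)^n - 1)/(Real.exp c - 1)) := by
          rw [← Finset.mul_sum, hgeom]
      _ = (b - 1) * (c * Real.exp (c*u) / (Real.exp c - 1)) := by
          rw [hexpb]; field_simp
  -- put LHS together
  have hEfin : volume E < ⊤ := by
    apply lt_of_le_of_lt (MeasureTheory.measure_mono hEsub)
    rw [Real.volume_Ico]
    exact ENNReal.ofReal_lt_top
  have hmu_toReal : ((Measure.map T (unifMeasure (Set.Icc 1 b))) A).toReal
      = ∫ u in E, c * Real.exp (c*u) / (Real.exp c - 1) := by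
    rw [hmuA, hicc_ico, hdecomp, ENNReal.toReal_mul, ENNReal.toReal_sum hfin]
    rw [ENNReal.toReal_inv, ENNReal.toReal_ofReal hbm1.le]
    have : ∑ k ∈ Finset.range n, (volume (S ∩ Set.Ico (a k) (a (k+1)))).toReal
        = ∑ k ∈ Finset.range n, ∫ u in E, c * Real.exp (c * (u + k)) := by
      apply Finset.sum_congr rfl
      intro k hk
      exact hvol_piece k (Finset.mem_range.1 hk)
    rw [this, hsum]
    field_simp
  have hnu_toReal : ((unifMeasure (Set.Ico 0 1)) A).toReal = ∫ u in E, (1:ℝ) := by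
    rw [hnu, MeasureTheory.setIntegral_const]
    simp
    rfl
  rw [hmu_toReal, hnu_toReal]
  -- final bound
  have hgE : IntegrableOn (fun u => c * Real.exp (c*u) / (Real.exp c - 1)) E volume := by
    refine (Continuous.integrableOn_Icc (a := (0:ℝ)) (b := 1) ?_).mono_set hEsub'
    exact (continuous_const.mul (Real.continuous_exp.comp
      (continuous_const.mul continuous_id))).div_const _
  have h1E : IntegrableOn (fun _ : ℝ => (1:ℝ)) E volume := by
    exact MeasureTheory.integrableOn_const hEfin.ne
  have hsub_int : (∫ u in E, c * Real.exp (c*u) / (Real.exp c - 1)) - (∫ u in E, (1:ℝ))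
      = ∫ u in E, (c * Real.exp (c*u) / (Real.exp c - 1) - 1) :=
    (MeasureTheory.integral_sub hgE h1E).symm
  rw [hsub_int]
  have := integral_bound hc hEm hEsub
  calc |∫ u in E, (c * Real.exp (c*u) / (Real.exp c - 1) - 1)| ≤ c/8 := this
    _ = Real.log b / (8 * n) := by rw [hcdef]; ring
end Part3
end

section
/- Fix b > 1. Let Y be uniformly distributed on [1,b] and let X = log_b Y. Then for every positive integer n, δ(nX mod 1, U[0,1)) < (ln b)/(2√12 · n). -/
open MeasureTheory ProbabilityTheory Set

open Real

section Aux

private lemma d2 (s : ℝ) :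
    HasDerivAt (fun s : ℝ => s^2*exp s - 2*(s*exp s) + 2*exp s - 2)
      (s^2*exp s) s := by
  have h1 : HasDerivAt (fun s : ℝ => s^2) (2*s) s := by simpa using hasDerivAt_pow 2 s
  have he := Real.hasDerivAt_exp s
  have h3 : HasDerivAt (fun s : ℝ => s) 1 s := hasDerivAt_id s
  have := (((h1.mul he).sub (((h3.mul he)).const_mul 2)).add (he.const_mul 2)).sub_const 2
  refine this.congr_deriv ?_
  ring

private lemma f2_pos {t : ℝ} (ht : 0 < t) :
    0 < t^2*exp t - 2*(t*exp t) + 2*exp t - 2 := by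
  have mono : StrictMonoOn (fun s : ℝ => s^2*exp s - 2*(s*exp s) + 2*exp s - 2) (Ici 0) := by
    apply strictMonoOn_of_deriv_pos (convex_Ici 0)
    · exact (Continuous.continuousOn (by continuity))
    · intro s hs
      rw [interior_Ici] at hs
      rw [(d2 s).deriv]
      have hs0 : 0 < s := hs
      positivity
  have := mono (self_mem_Ici) (le_of_lt ht : (0:ℝ) ≤ t) ht
  simpa using this

private lemma d1 (s : ℝ) :
    HasDerivAt (fun s : ℝ => s^2*exp s - 4*(s*exp s) - 2*s + 6*exp s - 6)
      (s^2*exp s - 2*(s*exp s) + 2*exp s - 2) s := by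
  have h1 : HasDerivAt (fun s : ℝ => s^2) (2*s) s := by simpa using hasDerivAt_pow 2 s
  have he := Real.hasDerivAt_exp s
  have h3 : HasDerivAt (fun s : ℝ => s) 1 s := hasDerivAt_id s
  have := ((((h1.mul he).sub ((h3.mul he).const_mul 4)).sub (h3.const_mul 2)).add
      (he.const_mul 6)).sub_const 6
  refine this.congr_deriv ?_
  ring

private lemma f1_pos {t : ℝ} (ht : 0 < t) :
    0 < t^2*exp t - 4*(t*exp t) - 2*t + 6*exp t - 6 := by
  have mono : StrictMonoOn (fun s : ℝ => s^2*exp s - 4*(s*exp s) - 2*s + 6*exp s - 6) (Ici 0) := by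
    apply strictMonoOn_of_deriv_pos (convex_Ici 0)
    · exact (Continuous.continuousOn (by continuity))
    · intro s hs
      rw [interior_Ici] at hs
      rw [(d1 s).deriv]
      exact f2_pos hs
  have := mono (self_mem_Ici) (le_of_lt ht : (0:ℝ) ≤ t) ht
  simpa using this

private lemma d0 (s : ℝ) :
    HasDerivAt (fun s : ℝ => s^2*(exp s - 1) - 6*(s*(exp s + 1)) + 12*(exp s - 1))
      (s^2*exp s - 4*(s*exp s) - 2*s + 6*exp s - 6) s := by
  have h1 : HasDerivAt (fun s : ℝ => s^2) (2*s) s := by simpa using hasDerivAt_pow 2 s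
  have he := Real.hasDerivAt_exp s
  have h3 : HasDerivAt (fun s : ℝ => s) 1 s := hasDerivAt_id s
  have := ((h1.mul (he.sub_const 1)).sub ((h3.mul (he.add_const 1)).const_mul 6)).add
      ((he.sub_const 1).const_mul 12)
  refine this.congr_deriv ?_
  ring

/-- key: `6 t (e^t + 1) - 12 (e^t - 1) < t^2 (e^t - 1)` for `t > 0`. -/
lemma key_ineq_s13 {t : ℝ} (ht : 0 < t) :
    6*(t*(exp t + 1)) - 12*(exp t - 1) < t^2*(exp t - 1) := by
  have mono : StrictMonoOn
      (fun s : ℝ => s^2*(exp s - 1) - 6*(s*(exp s + 1)) + 12*(exp s - 1)) (Ici 0) := by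
    apply strictMonoOn_of_deriv_pos (convex_Ici 0)
    · exact (Continuous.continuousOn (by continuity))
    · intro s hs
      rw [interior_Ici] at hs
      rw [(d0 s).deriv]
      exact f1_pos hs
  have := mono (self_mem_Ici) (le_of_lt ht : (0:ℝ) ≤ t) ht
  simp at this
  linarith


lemma intExp {t : ℝ} (ht : t ≠ 0) (x : ℝ) :
    ∫ u in (0:ℝ)..x, exp (t*u) = (exp (t*x) - 1)/t := by
  have h : ∀ u ∈ uIcc (0:ℝ) x, HasDerivAt (fun u => exp (t*u)/t) (exp (t*u)) u := by
    intro u _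
    have h1 : HasDerivAt (fun u : ℝ => t*u) t u := by
      simpa using (hasDerivAt_id u).const_mul t
    have := ((Real.hasDerivAt_exp (t*u)).comp u h1).div_const t
    refine this.congr_deriv ?_
    field_simp
  have hi : IntervalIntegrable (fun u => exp (t*u)) volume 0 x :=
    (Continuous.intervalIntegrable (by continuity) 0 x)
  rw [intervalIntegral.integral_eq_sub_of_hasDerivAt h hi]
  simp [mul_comm]
  ring

lemma ig1 {t : ℝ} (ht : 0 < t) (x : ℝ) :
    ∫ u in (0:ℝ)..x, t * exp (t*u) / (exp t - 1) = (exp (t*x) - 1)/(exp t - 1) := by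
  have hE : (1:ℝ) < exp t := by
    rw [show (1:ℝ) = exp 0 by simp]; exact Real.exp_lt_exp.2 ht
  have ht' : t ≠ 0 := ht.ne'
  have hE0 : exp t - 1 ≠ 0 := by linarith
  have : (fun u => t * exp (t*u) / (exp t - 1)) =
      fun u => (t / (exp t - 1)) * exp (t*u) := by funext u; ring
  rw [this, intervalIntegral.integral_const_mul, intExp ht.ne' x]
  field_simp

lemma ig2 {t : ℝ} (ht : 0 < t) :
    ∫ u in (0:ℝ)..1, (t * exp (t*u) / (exp t - 1) - 1)^2
      = (t * (exp t + 1) - 2*(exp t - 1)) / (2*(exp t - 1)) := by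
  have hE : (1:ℝ) < exp t := by
    rw [show (1:ℝ) = exp 0 by simp]; exact Real.exp_lt_exp.2 ht
  have ht' : t ≠ 0 := ht.ne'
  have hE0 : exp t - 1 ≠ 0 := by linarith
  have hpt : (fun u => (t * exp (t*u) / (exp t - 1) - 1)^2)
      = fun u => (t/(exp t - 1))^2 * exp ((2*t)*u)
          - (2*t/(exp t - 1)) * exp (t*u) + 1 := by
    funext u
    have h2 : exp ((2*t)*u) = exp (t*u) * exp (t*u) := by
      rw [← Real.exp_add]; ring_nf
    rw [h2]
    field_simp
    ring
  rw [hpt]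
  have i1 : IntervalIntegrable (fun u => (t/(exp t - 1))^2 * exp ((2*t)*u)) volume 0 1 :=
    (Continuous.intervalIntegrable (by continuity) 0 1)
  have i2 : IntervalIntegrable (fun u => (2*t/(exp t - 1)) * exp (t*u)) volume 0 1 :=
    (Continuous.intervalIntegrable (by continuity) 0 1)
  have i3 : IntervalIntegrable (fun _ : ℝ => (1:ℝ)) volume 0 1 :=
    (Continuous.intervalIntegrable (by continuity) 0 1)
  rw [intervalIntegral.integral_add (i1.sub i2) i3, intervalIntegral.integral_sub i1 i2,
    intervalIntegral.integral_const_mul, intervalIntegral.integral_const_mul,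
    intExp (by positivity : (2*t) ≠ 0), intExp ht.ne']
  have h2t : exp (2*t*1) = exp t * exp t := by
    rw [← Real.exp_add]; ring_nf
  simp only [mul_one] at *
  rw [h2t]
  simp [intervalIntegral.integral_const]
  field_simp
  ring


lemma set_decomp {b : ℝ} (hb : 1 < b) {n : ℕ} (hn : 0 < n) {x : ℝ}
    (hx0 : 0 ≤ x) (hx1 : x < 1) :
    {y : ℝ | Int.fract ((n:ℝ) * Real.logb b y) ≤ x} ∩ Icc 1 b
      = (⋃ k ∈ Finset.range n,
          Icc (exp (Real.log b / n * k)) (exp (Real.log b / n * (k + x)))) ∪ {b} := by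
  have hb0 : (0:ℝ) < b := lt_trans one_pos hb
  have hlb : 0 < Real.log b := Real.log_pos hb
  have hn0 : (0:ℝ) < n := by exact_mod_cast hn
  set t : ℝ := Real.log b / n with htdef
  have ht : 0 < t := by positivity
  have htn : t * n = Real.log b := by rw [htdef]; field_simp
  ext y
  simp only [mem_inter_iff, mem_setOf_eq, mem_union, mem_iUnion, mem_singleton_iff,
    Finset.mem_range, mem_Icc, exists_prop]
  constructor
  · rintro ⟨hf, hy1, hyb⟩
    rcases eq_or_lt_of_le hyb with hyb' | hyb'
    · exact Or.inr hyb'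
    left
    have hy0 : (0:ℝ) < y := lt_of_lt_of_le one_pos hy1
    have hly0 : 0 ≤ Real.log y := Real.log_nonneg hy1
    have hly1 : Real.log y < Real.log b := Real.log_lt_log hy0 hyb'
    set z : ℝ := (n:ℝ) * Real.logb b y with hz
    have hzval : z = (n / Real.log b) * Real.log y := by
      rw [hz, Real.logb]; ring
    have hz0 : 0 ≤ z := by rw [hzval]; positivity
    have hzn : z < n := by
      rw [hzval]
      calc (n / Real.log b) * Real.log y < (n / Real.log b) * Real.log b :=
            mul_lt_mul_of_pos_left hly1 (by positivity)
        _ = n := by field_simp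
    have hfl0 : 0 ≤ ⌊z⌋ := Int.floor_nonneg.2 hz0
    have hkz : ((⌊z⌋.toNat : ℕ) : ℝ) = (⌊z⌋ : ℝ) := by
      exact_mod_cast congrArg Int.cast (Int.toNat_of_nonneg hfl0)
    have hyz : y = exp (t * z) := by
      have harg : t * z = Real.log y := by
        rw [hzval, htdef]; field_simp
      rw [harg, Real.exp_log hy0]
    refine ⟨⌊z⌋.toNat, ?_, ?_, ?_⟩
    · have h1 : ⌊z⌋ < (n:ℤ) := Int.floor_lt.2 (by exact_mod_cast hzn)
      omega
    · rw [hyz]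
      apply Real.exp_le_exp.2
      have := Int.floor_le z
      rw [hkz]
      nlinarith
    · rw [hyz]
      apply Real.exp_le_exp.2
      have hfr : z - ⌊z⌋ ≤ x := by
        rw [Int.self_sub_floor]; exact hf
      rw [hkz]
      nlinarith
  · rintro (⟨k, hkn, hk1, hk2⟩ | hyb)
    · have hkx : (k:ℝ) + x < n := by
        have : (k:ℝ) + 1 ≤ n := by exact_mod_cast hkn
        linarith
      have hy1 : 1 ≤ y := le_trans (Real.one_le_exp (by positivity)) hk1
      have hy0 : (0:ℝ) < y := lt_of_lt_of_le one_pos hy1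
      have hyb : y ≤ b := by
        calc y ≤ exp (t * (k + x)) := hk2
          _ ≤ exp (t * n) := Real.exp_le_exp.2 (by nlinarith)
          _ = b := by rw [htn, Real.exp_log hb0]
      refine ⟨?_, hy1, hyb⟩
      set z : ℝ := (n:ℝ) * Real.logb b y with hz
      have hzval : z = (n / Real.log b) * Real.log y := by
        rw [hz, Real.logb]; ring
      have hc : (0:ℝ) < n / Real.log b := by positivity
      have hct : (n / Real.log b) * t = 1 := by rw [htdef]; field_simp
      have hl1 : t * k ≤ Real.log y := (Real.le_log_iff_exp_le hy0).2 hk1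
      have hl2 : Real.log y ≤ t * (k + x) := (Real.log_le_iff_le_exp hy0).2 hk2
      have hzk : (k:ℝ) ≤ z := by
        rw [hzval]
        nlinarith [mul_le_mul_of_nonneg_left hl1 hc.le]
      have hzkx : z ≤ k + x := by
        rw [hzval]
        nlinarith [mul_le_mul_of_nonneg_left hl2 hc.le]
      have hfl : ⌊z⌋ = (k:ℤ) := by
        rw [Int.floor_eq_iff]
        constructor
        · exact_mod_cast hzk
        · push_cast; linarith
      have : Int.fract z = z - k := by
        rw [← Int.self_sub_floor, hfl]; norm_num
      rw [this]
      linarith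
    · subst hyb
      have : Real.logb y y = 1 := Real.logb_self_eq_one hb
      refine ⟨?_, le_of_lt hb, le_refl _⟩
      rw [this, mul_one, Int.fract_natCast]
      exact hx0

lemma unif_prob {b : ℝ} (hb : 1 < b) : IsProbabilityMeasure (unifMeasure (Icc 1 b)) := by
  constructor
  rw [unifMeasure, Measure.smul_apply, Measure.restrict_apply MeasurableSet.univ, univ_inter,
    smul_eq_mul, Real.volume_Icc]
  exact ENNReal.inv_mul_cancel (ENNReal.ofReal_pos.2 (by linarith)).ne' ENNReal.ofReal_ne_top

lemma meas_T (b : ℝ) (n : ℕ) :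
    Measurable fun y : ℝ => Int.fract ((n:ℝ) * Real.logb b y) := by
  have h : Measurable fun y : ℝ => Real.logb b y := by
    simp only [← Real.log_div_log]
    exact Real.measurable_log.div_const _
  exact (h.const_mul _).fract

lemma map_T_eq {b : ℝ} (hb : 1 < b) {n : ℕ} (hn : 0 < n) :
    Measure.map (fun y => Int.fract ((n:ℝ) * Real.logb b y)) (unifMeasure (Icc 1 b))
      = volume.withDensity ((Ico (0:ℝ) 1).indicator
          (fun u => ENNReal.ofReal
            (Real.log b / n * exp (Real.log b / n * u) / (exp (Real.log b / n) - 1)))) := by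
  have hb0 : (0:ℝ) < b := lt_trans one_pos hb
  have hbm : (0:ℝ) < b - 1 := by linarith
  have hlb : 0 < Real.log b := Real.log_pos hb
  have hn0 : (0:ℝ) < n := by exact_mod_cast hn
  set t : ℝ := Real.log b / n with htdef
  have ht : 0 < t := by positivity
  have hE1 : (1:ℝ) < exp t := by
    rw [show (1:ℝ) = exp 0 by simp]; exact Real.exp_lt_exp.2 ht
  have hE0 : exp t - 1 ≠ 0 := by linarith
  have hEn : (exp t)^n = b := by
    rw [← Real.exp_nat_mul, show (n:ℝ) * t = Real.log b by rw [htdef]; field_simp,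
      Real.exp_log hb0]
  have hgnn : ∀ u : ℝ, 0 ≤ t * exp (t*u) / (exp t - 1) := by
    intro u
    have : (0:ℝ) < exp t - 1 := by linarith
    positivity
  have hgc : Continuous fun u : ℝ => t * exp (t*u) / (exp t - 1) := by
    apply Continuous.div_const
    continuity
  haveI := unif_prob hb
  haveI : IsProbabilityMeasure (Measure.map
      (fun y => Int.fract ((n:ℝ) * Real.logb b y)) (unifMeasure (Icc 1 b))) :=
    Measure.isProbabilityMeasure_map (meas_T b n).aemeasurable
  apply Measure.ext_of_Iic
  intro x
  -- RHS reduction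
  have hD : (volume.withDensity ((Ico (0:ℝ) 1).indicator
      (fun u => ENNReal.ofReal (t * exp (t * u) / (exp t - 1))))) (Iic x)
      = ∫⁻ u in Ico (0:ℝ) 1 ∩ Iic x, ENNReal.ofReal (t * exp (t * u) / (exp t - 1)) := by
    rw [withDensity_apply _ measurableSet_Iic,
      lintegral_indicator measurableSet_Ico,
      Measure.restrict_restrict measurableSet_Ico]
  -- LHS reduction
  rw [Measure.map_apply (meas_T b n) measurableSet_Iic, hD, unifMeasure,
    Measure.smul_apply, smul_eq_mul, Real.volume_Icc,
    Measure.restrict_apply ((meas_T b n) measurableSet_Iic)]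
  have hpre : (fun y : ℝ => Int.fract ((n:ℝ) * Real.logb b y)) ⁻¹' (Iic x)
      = {y : ℝ | Int.fract ((n:ℝ) * Real.logb b y) ≤ x} := rfl
  rcases lt_or_ge x 0 with hx | hx0
  · -- x < 0 : both sides 0
    have h1 : {y : ℝ | Int.fract ((n:ℝ) * Real.logb b y) ≤ x} = ∅ := by
      ext y; simp only [mem_setOf_eq, mem_empty_iff_false, iff_false, not_le]
      exact lt_of_lt_of_le hx (Int.fract_nonneg _)
    have h2 : Ico (0:ℝ) 1 ∩ Iic x = ∅ := by
      ext u; simp only [mem_inter_iff, mem_Ico, mem_Iic, mem_empty_iff_false, iff_false]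
      rintro ⟨⟨h, _⟩, h'⟩; linarith
    rw [hpre, h1, h2]
    simp
  rcases lt_or_ge x 1 with hx1 | hx1
  · -- main case 0 ≤ x < 1
    rw [hpre, set_decomp hb hn hx0 hx1,
      measure_congr (union_ae_eq_left_of_ae_eq_empty (ae_eq_empty.2 (by simp)))]
    have hd : (↑(Finset.range n) : Set ℕ).PairwiseDisjoint
        (fun k : ℕ => Icc (exp (t*k)) (exp (t*(k+x)))) := by
      have key : ∀ i j : ℕ, i < j →
          Disjoint (Icc (exp (t*i)) (exp (t*(i+x)))) (Icc (exp (t*j)) (exp (t*(j+x)))) := by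
        intro i j hij
        apply Set.disjoint_left.2
        intro a hai haj
        have h1 : a ≤ exp (t*(i+x)) := hai.2
        have h2 : exp (t*j) ≤ a := haj.1
        have hij' : (i:ℝ) + 1 ≤ j := by exact_mod_cast hij
        have : exp (t*(i+x)) < exp (t*j) := Real.exp_lt_exp.2 (by nlinarith)
        linarith
      intro i hi j hj hij
      rcases hij.lt_or_gt with h | h
      · exact key i j h
      · exact (key j i h).symm
    rw [measure_biUnion_finset hd (fun k _ => measurableSet_Icc)]
    simp only [Real.volume_Icc]
    rw [← ENNReal.ofReal_sum_of_nonneg (fun k _ => by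
      have : t*(k:ℝ) ≤ t*((k:ℝ)+x) := by nlinarith
      have := Real.exp_le_exp.2 this
      linarith)]
    have hsum : ∑ k ∈ Finset.range n, (exp (t*((k:ℝ)+x)) - exp (t*(k:ℝ)))
        = (b-1) * ((exp (t*x) - 1)/(exp t - 1)) := by
      have hterm : ∀ k : ℕ, exp (t*((k:ℝ)+x)) - exp (t*(k:ℝ))
          = (exp t)^k * (exp (t*x) - 1) := by
        intro k
        rw [show t*((k:ℝ)+x) = (k:ℝ)*t + t*x by ring, Real.exp_add,
          show t*(k:ℝ) = (k:ℝ)*t by ring, Real.exp_nat_mul]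
        ring
      simp_rw [hterm]
      rw [← Finset.sum_mul, geom_sum_eq hE1.ne' n, hEn]
      field_simp
    rw [hsum, ENNReal.ofReal_mul hbm.le, ← mul_assoc,
      ENNReal.inv_mul_cancel (ENNReal.ofReal_pos.2 hbm).ne' ENNReal.ofReal_ne_top, one_mul]
    -- now RHS lintegral
    have hIx : Ico (0:ℝ) 1 ∩ Iic x = Icc 0 x := by
      ext u
      simp only [mem_inter_iff, mem_Ico, mem_Iic, mem_Icc]
      constructor
      · rintro ⟨⟨h1, h2⟩, h3⟩; exact ⟨h1, h3⟩
      · rintro ⟨h1, h2⟩; exact ⟨⟨h1, by linarith⟩, h2⟩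
    rw [hIx, ← ofReal_integral_eq_lintegral_ofReal
      (hgc.integrableOn_Icc) (Filter.Eventually.of_forall (fun u => hgnn u)),
      integral_Icc_eq_integral_Ioc, ← intervalIntegral.integral_of_le hx0, ig1 ht x]
  · -- x ≥ 1
    have h1 : {y : ℝ | Int.fract ((n:ℝ) * Real.logb b y) ≤ x} = univ := by
      ext y; simp only [mem_setOf_eq, mem_univ, iff_true]
      exact le_trans (Int.fract_lt_one _).le hx1
    have h2 : Ico (0:ℝ) 1 ∩ Iic x = Ico 0 1 := by
      ext u
      simp only [mem_inter_iff, mem_Ico, mem_Iic, and_iff_left_iff_imp]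
      rintro ⟨_, h⟩; linarith
    rw [hpre, h1, univ_inter, h2,
      ← ofReal_integral_eq_lintegral_ofReal
        ((hgc.integrableOn_Icc).mono_set Ico_subset_Icc_self)
        (Filter.Eventually.of_forall (fun u => hgnn u)),
      integral_Ico_eq_integral_Ioo, ← integral_Ioc_eq_integral_Ioo,
      ← intervalIntegral.integral_of_le zero_le_one, ig1 ht 1, mul_one]
    rw [div_self hE0]
    simp [ENNReal.inv_mul_cancel (ENNReal.ofReal_pos.2 hbm).ne' ENNReal.ofReal_ne_top]

lemma main_bound {t : ℝ} (ht : 0 < t) :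
    tvDist (volume.withDensity ((Ico (0:ℝ) 1).indicator
        (fun u => ENNReal.ofReal (t * exp (t*u) / (exp t - 1)))))
      (unifMeasure (Ico 0 1)) < t / (2 * (2 * Real.sqrt 3)) := by
  have hE1 : (1:ℝ) < exp t := by
    rw [show (1:ℝ) = exp 0 by simp]; exact Real.exp_lt_exp.2 ht
  have hEpos : (0:ℝ) < exp t - 1 := by linarith
  have hE0 : exp t - 1 ≠ 0 := hEpos.ne'
  set g : ℝ → ℝ := fun u => t * exp (t*u) / (exp t - 1) with hg
  have hgnn : ∀ u : ℝ, 0 ≤ g u := fun u => by rw [hg]; positivity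
  have hgc : Continuous g := by rw [hg]; apply Continuous.div_const; continuity
  set s : Set ℝ := Ico (0:ℝ) 1 with hs
  have hsm : MeasurableSet s := measurableSet_Ico
  have hvol : (volume s).toReal = 1 := by simp [hs, Real.volume_Ico]
  have hgint : IntegrableOn g s := (hgc.integrableOn_Icc).mono_set Ico_subset_Icc_self
  have h1int : IntegrableOn (fun _ : ℝ => (1:ℝ)) s := by
    refine integrableOn_const ?_
    rw [hs, Real.volume_Ico]
    norm_num
  have hg1int : IntegrableOn (fun u => g u - 1) s := hgint.sub h1int
  have hsqint : IntegrableOn (fun u => (g u - 1)^2) s :=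
    (((hgc.sub continuous_const).pow 2).integrableOn_Icc).mono_set Ico_subset_Icc_self
  have hint_g : ∫ u in s, g u = 1 := by
    rw [hs, integral_Ico_eq_integral_Ioo, ← integral_Ioc_eq_integral_Ioo,
      ← intervalIntegral.integral_of_le zero_le_one, hg, ig1 ht 1, mul_one, div_self hE0]
  have hint_one : ∫ u in s, (1:ℝ) = 1 := by
    rw [setIntegral_const, smul_eq_mul, mul_one, measureReal_def, hvol]
  have hint_diff : ∫ u in s, (g u - 1) = 0 := by
    rw [integral_sub hgint h1int, hint_g, hint_one, sub_self]
  set I2 : ℝ := ∫ u in s, (g u - 1)^2 with hI2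
  have hI2val : I2 = (t * (exp t + 1) - 2*(exp t - 1)) / (2*(exp t - 1)) := by
    rw [hI2, hs, integral_Ico_eq_integral_Ioo, ← integral_Ioc_eq_integral_Ioo,
      ← intervalIntegral.integral_of_le zero_le_one, hg, ig2 ht]
  set c : ℝ := t / (2 * Real.sqrt 3) with hc
  have hsqrt3 : (0:ℝ) < Real.sqrt 3 := Real.sqrt_pos.2 (by norm_num)
  have hcpos : 0 < c := by rw [hc]; positivity
  have hI2lt : I2 < c^2 := by
    have h12 : c^2 = t^2/12 := by
      rw [hc, div_pow, mul_pow, Real.sq_sqrt (by norm_num : (0:ℝ) ≤ 3)]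
      norm_num
    rw [h12, hI2val, div_lt_div_iff₀ (by linarith) (by norm_num : (0:ℝ) < 12)]
    nlinarith [key_ineq_s13 ht]
  set K : ℝ := I2/(4*c) + c/4 with hK
  have hKlt : K < c/2 := by
    have h1 : I2/(4*c) < c/4 := by
      rw [div_lt_iff₀ (by positivity : (0:ℝ) < 4*c)]
      nlinarith [hI2lt]
    rw [hK]
    linarith
  -- pointwise bounds and psi integrals
  set ψp : ℝ → ℝ := fun u => ((g u - 1)^2/(4*c) + c/4) + (g u - 1)/2 with hψp
  set ψm : ℝ → ℝ := fun u => ((g u - 1)^2/(4*c) + c/4) - (g u - 1)/2 with hψm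
  have hauxp : ∀ u : ℝ, (g u - 1)/2 - c/4 ≤ (g u - 1)^2/(4*c) := by
    intro u
    rw [le_div_iff₀ (by positivity : (0:ℝ) < 4*c)]
    nlinarith [sq_nonneg (g u - 1 - c)]
  have hauxm : ∀ u : ℝ, -((g u - 1)/2) - c/4 ≤ (g u - 1)^2/(4*c) := by
    intro u
    rw [le_div_iff₀ (by positivity : (0:ℝ) < 4*c)]
    nlinarith [sq_nonneg (g u - 1 + c)]
  have hψpnn : ∀ u : ℝ, 0 ≤ ψp u := by intro u; rw [hψp]; have := hauxm u; dsimp; linarith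
  have hψmnn : ∀ u : ℝ, 0 ≤ ψm u := by intro u; rw [hψm]; have := hauxp u; dsimp; linarith
  have hleψp : ∀ u : ℝ, g u - 1 ≤ ψp u := by
    intro u; rw [hψp]; have := hauxp u; dsimp; linarith
  have hleψm : ∀ u : ℝ, -(g u - 1) ≤ ψm u := by
    intro u; rw [hψm]; have := hauxm u; dsimp; linarith
  have hψpint : IntegrableOn ψp s :=
    ((hsqint.div_const _).add (integrableOn_const (by
      rw [hs, Real.volume_Ico]; norm_num))).add (hg1int.div_const 2)
  have hψmint : IntegrableOn ψm s :=
    ((hsqint.div_const _).add (integrableOn_const (by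
      rw [hs, Real.volume_Ico]; norm_num))).sub (hg1int.div_const 2)
  have hconst : ∫ _ in s, (c/4 : ℝ) = c/4 := by
    rw [setIntegral_const, smul_eq_mul, measureReal_def, hvol, one_mul]
  have hcint : IntegrableOn (fun _ : ℝ => (c/4 : ℝ)) s := by
    refine integrableOn_const ?_
    rw [hs, Real.volume_Ico]; norm_num
  have hsq4int : IntegrableOn (fun u => (g u - 1)^2/(4*c)) s := hsqint.div_const _
  have hfirstint : IntegrableOn (fun u => (g u - 1)^2/(4*c) + c/4) s := hsq4int.add hcint
  have hg12int : IntegrableOn (fun u => (g u - 1)/2) s := hg1int.div_const 2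
  have hψpval : ∫ u in s, ψp u = K := by
    simp only [hψp]
    rw [integral_add hfirstint hg12int, integral_add hsq4int hcint, hconst,
      integral_div, integral_div, hint_diff, hK, ← hI2]
    norm_num
  have hψmval : ∫ u in s, ψm u = K := by
    simp only [hψm]
    rw [integral_sub hfirstint hg12int, integral_add hsq4int hcint, hconst,
      integral_div, integral_div, hint_diff, hK, ← hI2]
    norm_num
  -- per-set bound
  have hbound : ∀ A : Set ℝ, MeasurableSet A →
      |(volume.withDensity ((Ico (0:ℝ) 1).indicator
          (fun u => ENNReal.ofReal (t * exp (t*u) / (exp t - 1)))) A).toReal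
        - (unifMeasure (Ico 0 1) A).toReal| ≤ K := by
    intro A hA
    have hBm : MeasurableSet (s ∩ A) := hsm.inter hA
    have hBsub : s ∩ A ⊆ s := inter_subset_left
    have hDA : (volume.withDensity ((Ico (0:ℝ) 1).indicator
        (fun u => ENNReal.ofReal (t * exp (t*u) / (exp t - 1)))) A).toReal
        = ∫ u in s ∩ A, g u := by
      rw [withDensity_apply _ hA, lintegral_indicator hsm,
        Measure.restrict_restrict hsm,
        ← ofReal_integral_eq_lintegral_ofReal (hgint.mono_set hBsub)
          (Filter.Eventually.of_forall hgnn),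
        ENNReal.toReal_ofReal (setIntegral_nonneg hBm (fun u _ => hgnn u))]
    have hνA : (unifMeasure (Ico 0 1) A).toReal = ∫ u in s ∩ A, (1:ℝ) := by
      have hunif : unifMeasure (Ico (0:ℝ) 1) = volume.restrict (Ico 0 1) := by
        rw [unifMeasure, Real.volume_Ico]
        norm_num
      rw [hunif, Measure.restrict_apply hA, inter_comm A, setIntegral_const, smul_eq_mul,
        mul_one, ← hs, measureReal_def]
    rw [hDA, hνA, ← integral_sub (hgint.mono_set hBsub) (h1int.mono_set hBsub)]
    have hup : ∫ u in s ∩ A, (g u - 1) ≤ K := by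
      calc ∫ u in s ∩ A, (g u - 1) ≤ ∫ u in s ∩ A, ψp u :=
            setIntegral_mono_on (hg1int.mono_set hBsub) (hψpint.mono_set hBsub) hBm
              (fun u _ => hleψp u)
        _ ≤ ∫ u in s, ψp u :=
            setIntegral_mono_set hψpint (Filter.Eventually.of_forall hψpnn)
              (HasSubset.Subset.eventuallyLE hBsub)
        _ = K := hψpval
    have hdown : -K ≤ ∫ u in s ∩ A, (g u - 1) := by
      have : ∫ u in s ∩ A, -(g u - 1) ≤ K := by
        calc ∫ u in s ∩ A, -(g u - 1) ≤ ∫ u in s ∩ A, ψm u :=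
              setIntegral_mono_on ((hg1int.mono_set hBsub).neg) (hψmint.mono_set hBsub) hBm
                (fun u _ => hleψm u)
          _ ≤ ∫ u in s, ψm u :=
              setIntegral_mono_set hψmint (Filter.Eventually.of_forall hψmnn)
                (HasSubset.Subset.eventuallyLE hBsub)
          _ = K := hψmval
      rw [integral_neg] at this
      linarith
    exact abs_le.2 ⟨hdown, hup⟩
  -- conclude
  have hne : Nonempty {A : Set ℝ // MeasurableSet A} := ⟨⟨∅, MeasurableSet.empty⟩⟩
  have hsup : tvDist (volume.withDensity ((Ico (0:ℝ) 1).indicator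
      (fun u => ENNReal.ofReal (t * exp (t*u) / (exp t - 1)))))
      (unifMeasure (Ico 0 1)) ≤ K := by
    rw [tvDist]
    exact ciSup_le (fun A => hbound A.1 A.2)
  have hfin : c/2 = t / (2 * (2 * Real.sqrt 3)) := by rw [hc]; ring
  linarith

/-- (Boyle) For `b > 1`, `Y ∼ U[1,b]` and `X = log_b Y`:
`δ(nX mod 1, U[0,1)) < (ln b)/(2√12 · n)` for all positive integers `n`. -/
theorem stmt13 {Ω : Type*} [MeasureSpace Ω] [IsProbabilityMeasure (ℙ : Measure Ω)]
    (b : ℝ) (hb : 1 < b) (Y : Ω → ℝ) (hY : Measurable Y)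
    (hYunif : Measure.map Y (ℙ : Measure Ω) = unifMeasure (Set.Icc 1 b))
    (X : Ω → ℝ) (hX : X = fun ω => Real.logb b (Y ω))
    (n : ℕ) (hn : 0 < n) :
    tvDist (Measure.map (fun ω => Int.fract ((n : ℝ) * X ω)) (ℙ : Measure Ω))
        (unifMeasure (Set.Ico 0 1)) < Real.log b / (2 * Real.sqrt 12 * n) := by
  subst hX
  have hn0 : (0:ℝ) < n := by exact_mod_cast hn
  have hlb : 0 < Real.log b := Real.log_pos hb
  have ht : 0 < Real.log b / n := by positivity
  have hmap : Measure.map (fun ω => Int.fract ((n : ℝ) * (fun ω => Real.logb b (Y ω)) ω)) ℙ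
      = Measure.map (fun y => Int.fract ((n:ℝ) * Real.logb b y)) (unifMeasure (Icc 1 b)) := by
    rw [← hYunif, Measure.map_map (meas_T b n) hY]
    rfl
  rw [hmap, map_T_eq hb hn]
  have h12 : Real.sqrt 12 = 2 * Real.sqrt 3 := by
    rw [show (12:ℝ) = 2^2*3 by norm_num, Real.sqrt_mul (by positivity),
      Real.sqrt_sq (by norm_num : (0:ℝ) ≤ 2)]
  have hsqrt3 : (0:ℝ) < Real.sqrt 3 := Real.sqrt_pos.2 (by norm_num)
  have hrhs : Real.log b / (2 * Real.sqrt 12 * n)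
      = (Real.log b / n) / (2 * (2 * Real.sqrt 3)) := by
    rw [h12, div_div]
    ring
  rw [hrhs]
  exact main_bound ht

end Aux
end
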